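/- arXiv:0802.1380 — 2 statements merged into one kernel-verified Lean document; each statement's English description precedes it below -/
import Mathlib

section
/- Let N ≥ 1, let 𝒳₁, 𝒳₂, 𝒴 be finite nonempty sets, and let X₁ = (X_{1,1},…,X_{1,N}), X₂ = (X_{2,1},…,X_{2,N}), Y = (Y_1,…,Y_N) be random vectors on a common probability space such that: (i) X₁^N and X₂^N are independent, and (ii) for every i ∈ {1,…,N}, Y_i is conditionally independent of (X₁^N, X₂^N) given (X₁^i, X₂^i, Y^{i−1}) (these two conditions express that the joint law factorizes as Q(x₁^N) Q(x₂^N) ∏_{i=1}^N P(y_i | y^{i−1}, x₁^i, x₂^i), i.e. there is no feedback and the channel is causal). Then the conditional mutual information equals the causally conditioned directed information: I(X₁^N ; Y^N | X₂^N) = I(X₁^N → Y^N ‖ X₂^N) = ∑_{i=1}^{N} I(X₁^i ; Y_i | Y^{i−1}, X₂^i). -/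
open Finset

set_option synthInstance.maxSize 1000

/-- Probability mass of the event `X = a` under the weight function `μ` on the finite
sample space `Ω`. -/
noncomputable def pmass {Ω α : Type*} [Fintype Ω] [DecidableEq α]
    (μ : Ω → ℝ) (X : Ω → α) (a : α) : ℝ := ∑ ω, if X ω = a then μ ω else 0

/-- Shannon entropy (natural logarithm) of the discrete random variable `X` defined on the
finite probability space `(Ω, μ)`. -/
noncomputable def entropy {Ω α : Type*} [Fintype Ω] [Fintype α] [DecidableEq α]
    (μ : Ω → ℝ) (X : Ω → α) : ℝ := ∑ a, Real.negMulLog (pmass μ X a)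

/-- Conditional mutual information `I(X;Y|Z) = H(X,Z) + H(Y,Z) - H(X,Y,Z) - H(Z)`. -/
noncomputable def condMutualInfo {Ω α β γ : Type*} [Fintype Ω]
    [Fintype α] [DecidableEq α] [Fintype β] [DecidableEq β] [Fintype γ] [DecidableEq γ]
    (μ : Ω → ℝ) (X : Ω → α) (Y : Ω → β) (Z : Ω → γ) : ℝ :=
  entropy μ (fun ω => (X ω, Z ω)) + entropy μ (fun ω => (Y ω, Z ω))
    - entropy μ (fun ω => ((X ω, Y ω), Z ω)) - entropy μ Z

section Lib
variable {Ω : Type*} [Fintype Ω] {μ : Ω → ℝ}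

lemma pmass_congr {α β : Type*} [DecidableEq α] [DecidableEq β]
    {F : Ω → α} {G : Ω → β} {v : α} {w : β}
    (h : ∀ ω, F ω = v ↔ G ω = w) : pmass μ F v = pmass μ G w := by
  unfold pmass
  refine Finset.sum_congr rfl fun ω _ => ?_
  by_cases hh : F ω = v
  · rw [if_pos hh, if_pos ((h ω).1 hh)]
  · rw [if_neg hh, if_neg fun c => hh ((h ω).2 c)]

lemma pmass_nonneg (hμ0 : ∀ ω, 0 ≤ μ ω) {α : Type*} [DecidableEq α]
    (F : Ω → α) (v : α) : 0 ≤ pmass μ F v := by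
  refine Finset.sum_nonneg fun ω _ => ?_
  split
  · exact hμ0 ω
  · exact le_rfl

lemma pmass_eq_zero {α : Type*} [DecidableEq α]
    {F : Ω → α} {v : α} (h : ∀ ω, F ω ≠ v) : pmass μ F v = 0 := by
  unfold pmass
  refine Finset.sum_eq_zero fun ω _ => if_neg (h ω)

lemma pmass_le_of_imp (hμ0 : ∀ ω, 0 ≤ μ ω) {α β : Type*} [DecidableEq α] [DecidableEq β]
    {F : Ω → α} {G : Ω → β} {v : α} {w : β}
    (h : ∀ ω, F ω = v → G ω = w) : pmass μ F v ≤ pmass μ G w := by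
  refine Finset.sum_le_sum fun ω _ => ?_
  by_cases hh : F ω = v
  · rw [if_pos hh, if_pos (h ω hh)]
  · rw [if_neg hh]
    split
    · exact hμ0 ω
    · exact le_rfl

lemma pmass_comp {δ ε : Type*} [Fintype δ] [DecidableEq δ] [DecidableEq ε]
    (G : Ω → δ) (e : δ → ε) (y : ε) :
    pmass μ (fun ω => e (G ω)) y = ∑ d, if e d = y then pmass μ G d else 0 := by
  unfold pmass
  rw [eq_comm]
  calc ∑ d, (if e d = y then ∑ ω, if G ω = d then μ ω else 0 else 0)
      = ∑ d, ∑ ω, (if G ω = d ∧ e d = y then μ ω else 0) := by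
        refine Finset.sum_congr rfl fun d _ => ?_
        by_cases h : e d = y
        · rw [if_pos h]
          refine Finset.sum_congr rfl fun ω _ => by simp [h]
        · rw [if_neg h]
          rw [eq_comm]
          refine Finset.sum_eq_zero fun ω _ => by simp [h]
    _ = ∑ ω, ∑ d, (if G ω = d ∧ e d = y then μ ω else 0) := Finset.sum_comm
    _ = ∑ ω, if e (G ω) = y then μ ω else 0 := by
        refine Finset.sum_congr rfl fun ω _ => ?_
        rw [Finset.sum_eq_single (G ω)]
        · by_cases h : e (G ω) = y
          · rw [if_pos ⟨rfl, h⟩, if_pos h]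
          · rw [if_neg (fun c => h c.2), if_neg h]
        · intro d _ hd
          exact if_neg (fun c => hd c.1.symm)
        · intro h; exact absurd (Finset.mem_univ _) h

lemma entropy_comp_expand {δ ε : Type*} [Fintype δ] [DecidableEq δ] [Fintype ε] [DecidableEq ε]
    (G : Ω → δ) (e : δ → ε) :
    entropy μ (fun ω => e (G ω)) =
      ∑ d, -(pmass μ G d) * Real.log (pmass μ (fun ω => e (G ω)) (e d)) := by
  unfold entropy
  calc ∑ y, Real.negMulLog (pmass μ (fun ω => e (G ω)) y)
      = ∑ y, ∑ d, (if e d = y then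
          -(pmass μ G d) * Real.log (pmass μ (fun ω => e (G ω)) y) else 0) := by
        refine Finset.sum_congr rfl fun y _ => ?_
        rw [Real.negMulLog, pmass_comp G e y, ← Finset.sum_neg_distrib,
          Finset.sum_mul]
        refine Finset.sum_congr rfl fun d _ => ?_
        split <;> simp
    _ = ∑ d, ∑ y, (if e d = y then
          -(pmass μ G d) * Real.log (pmass μ (fun ω => e (G ω)) y) else 0) :=
        Finset.sum_comm
    _ = _ := by
        refine Finset.sum_congr rfl fun d _ => ?_
        rw [Finset.sum_ite_eq (Finset.univ) (e d)
          (fun y => -(pmass μ G d) * Real.log (pmass μ (fun ω => e (G ω)) y)), if_pos (Finset.mem_univ _)]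

lemma entropy_congr {α β : Type*} [Fintype α] [DecidableEq α] [Fintype β] [DecidableEq β]
    {F : Ω → α} {G : Ω → β} (h : ∀ ω ω', F ω = F ω' ↔ G ω = G ω') :
    entropy μ F = entropy μ G := by
  unfold entropy
  rw [← Finset.sum_subset (Finset.subset_univ (Finset.image F Finset.univ))
      (fun a _ ha => by
        rw [pmass_eq_zero (fun ω hω => ha (Finset.mem_image.2 ⟨ω, Finset.mem_univ _, hω⟩)),
          Real.negMulLog_zero]),
    ← Finset.sum_subset (Finset.subset_univ (Finset.image G Finset.univ))
      (fun a _ ha => by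
        rw [pmass_eq_zero (fun ω hω => ha (Finset.mem_image.2 ⟨ω, Finset.mem_univ _, hω⟩)),
          Real.negMulLog_zero])]
  refine Finset.sum_bij (fun a ha => G (Finset.mem_image.1 ha).choose) ?_ ?_ ?_ ?_
  · intro a ha
    exact Finset.mem_image.2 ⟨(Finset.mem_image.1 ha).choose, Finset.mem_univ _, rfl⟩
  · intro a₁ ha₁ a₂ ha₂ hG
    obtain ⟨-, hω₁⟩ := (Finset.mem_image.1 ha₁).choose_spec
    obtain ⟨-, hω₂⟩ := (Finset.mem_image.1 ha₂).choose_spec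
    rw [← hω₁, ← hω₂]
    exact (h _ _).2 hG
  · intro b hb
    obtain ⟨ω, _, hω⟩ := Finset.mem_image.1 hb
    have haF : F ω ∈ Finset.image F Finset.univ := Finset.mem_image.2 ⟨ω, Finset.mem_univ _, rfl⟩
    refine ⟨F ω, haF, ?_⟩
    obtain ⟨-, hω'⟩ := (Finset.mem_image.1 haF).choose_spec
    rw [← hω]
    exact (h _ _).1 hω'
  · intro a ha
    obtain ⟨-, hω₀⟩ := (Finset.mem_image.1 ha).choose_spec
    show Real.negMulLog (pmass μ F a) =
      Real.negMulLog (pmass μ G (G (Finset.mem_image.1 ha).choose))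
    congr 1
    refine pmass_congr fun ω => ?_
    have h2 := h ω (Finset.mem_image.1 ha).choose
    rw [hω₀] at h2
    exact h2

/-- Pointwise conditional independence of `f` and `g` given `h`. -/
def CI {α β γ : Type*} [DecidableEq α] [DecidableEq β] [DecidableEq γ]
    (μ : Ω → ℝ) (f : Ω → α) (g : Ω → β) (h : Ω → γ) : Prop :=
  ∀ a b c, pmass μ (fun ω => (f ω, g ω, h ω)) (a, b, c) * pmass μ h c
    = pmass μ (fun ω => (f ω, h ω)) (a, c) * pmass μ (fun ω => (g ω, h ω)) (b, c)


lemma pmass_split {β β' κ : Type*} [Fintype β] [DecidableEq β] [DecidableEq β'] [Fintype κ] [DecidableEq κ]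
    (g : Ω → β) (e : β → β') (K : Ω → κ) (b' : β') (k : κ) :
    pmass μ (fun ω => (e (g ω), K ω)) (b', k)
      = ∑ b, if e b = b' then pmass μ (fun ω => (g ω, K ω)) (b, k) else 0 := by
  have h1 : pmass μ (fun ω => (e (g ω), K ω)) (b', k)
      = ∑ d : β × κ, if (e d.1, d.2) = (b', k) then pmass μ (fun ω => (g ω, K ω)) d else 0 :=
    pmass_comp (fun ω => (g ω, K ω)) (fun x => (e x.1, x.2)) (b', k)
  rw [h1, Fintype.sum_prod_type]
  refine Finset.sum_congr rfl fun b _ => ?_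
  by_cases h : e b = b'
  · rw [if_pos h]
    rw [Finset.sum_eq_single k]
    · rw [if_pos (by rw [h])]
    · intro x _ hx
      exact if_neg (by simp [Prod.ext_iff, hx])
    · intro hk; exact absurd (Finset.mem_univ _) hk
  · rw [if_neg h]
    exact Finset.sum_eq_zero fun x _ => if_neg (by simp [Prod.ext_iff, h])

variable {α β γ : Type*} [DecidableEq α] [DecidableEq β] [DecidableEq γ]

lemma ci_symm {f : Ω → α} {g : Ω → β} {h : Ω → γ} (hci : CI μ f g h) : CI μ g f h := by
  intro b a c
  have e1 : pmass μ (fun ω => (g ω, f ω, h ω)) (b, a, c)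
      = pmass μ (fun ω => (f ω, g ω, h ω)) (a, b, c) :=
    pmass_congr fun ω => by simp only [Prod.mk.injEq]; try tauto
  rw [e1, hci a b c, mul_comm]

lemma ci_congr_h {γ' : Type*} [DecidableEq γ'] {f : Ω → α} {g : Ω → β} {h : Ω → γ}
    {h' : Ω → γ'} (hpart : ∀ ω ω', h ω = h ω' ↔ h' ω = h' ω')
    (hci : CI μ f g h) : CI μ f g h' := by
  intro a b c'
  by_cases hex : ∃ ω₀, h' ω₀ = c'
  · obtain ⟨ω₀, hω₀⟩ := hex
    have key : ∀ ω, h' ω = c' ↔ h ω = h ω₀ := fun ω => by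
      rw [← hω₀]; exact (hpart ω ω₀).symm
    have e1 : pmass μ (fun ω => (f ω, g ω, h' ω)) (a, b, c')
        = pmass μ (fun ω => (f ω, g ω, h ω)) (a, b, h ω₀) :=
      pmass_congr fun ω => by simp only [Prod.mk.injEq, key ω]
    have e2 : pmass μ h' c' = pmass μ h (h ω₀) := pmass_congr fun ω => key ω
    have e3 : pmass μ (fun ω => (f ω, h' ω)) (a, c')
        = pmass μ (fun ω => (f ω, h ω)) (a, h ω₀) :=
      pmass_congr fun ω => by simp only [Prod.mk.injEq, key ω]
    have e4 : pmass μ (fun ω => (g ω, h' ω)) (b, c')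
        = pmass μ (fun ω => (g ω, h ω)) (b, h ω₀) :=
      pmass_congr fun ω => by simp only [Prod.mk.injEq, key ω]
    rw [e1, e2, e3, e4]
    exact hci a b (h ω₀)
  · push_neg at hex
    have z1 : pmass μ (fun ω => (f ω, g ω, h' ω)) (a, b, c') = 0 :=
      pmass_eq_zero fun ω hc => hex ω (by simpa using congrArg (fun x => x.2.2) hc)
    have z2 : pmass μ (fun ω => (f ω, h' ω)) (a, c') = 0 :=
      pmass_eq_zero fun ω hc => hex ω (by simpa using congrArg (fun x => x.2) hc)
    rw [z1, z2, zero_mul, zero_mul]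

lemma ci_congr_g {β' : Type*} [DecidableEq β'] {f : Ω → α} {g : Ω → β} {g' : Ω → β'}
    {h : Ω → γ} (hpart : ∀ ω ω', g ω = g ω' ↔ g' ω = g' ω')
    (hci : CI μ f g h) : CI μ f g' h := by
  intro a b' c
  by_cases hex : ∃ ω₀, g' ω₀ = b'
  · obtain ⟨ω₀, hω₀⟩ := hex
    have key : ∀ ω, g' ω = b' ↔ g ω = g ω₀ := fun ω => by
      rw [← hω₀]; exact (hpart ω ω₀).symm
    have e1 : pmass μ (fun ω => (f ω, g' ω, h ω)) (a, b', c)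
        = pmass μ (fun ω => (f ω, g ω, h ω)) (a, g ω₀, c) :=
      pmass_congr fun ω => by simp only [Prod.mk.injEq, key ω]
    have e2 : pmass μ (fun ω => (g' ω, h ω)) (b', c)
        = pmass μ (fun ω => (g ω, h ω)) (g ω₀, c) :=
      pmass_congr fun ω => by simp only [Prod.mk.injEq, key ω]
    rw [e1, e2]
    exact hci a (g ω₀) c
  · push_neg at hex
    have z1 : pmass μ (fun ω => (f ω, g' ω, h ω)) (a, b', c) = 0 :=
      pmass_eq_zero fun ω hc => hex ω (by simpa using congrArg (fun x => x.2.1) hc)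
    have z2 : pmass μ (fun ω => (g' ω, h ω)) (b', c) = 0 :=
      pmass_eq_zero fun ω hc => hex ω (by simpa using congrArg (fun x => x.1) hc)
    rw [z1, z2, zero_mul, mul_zero]

lemma ci_congr_f {α' : Type*} [DecidableEq α'] {f : Ω → α} {f' : Ω → α'} {g : Ω → β}
    {h : Ω → γ} (hpart : ∀ ω ω', f ω = f ω' ↔ f' ω = f' ω')
    (hci : CI μ f g h) : CI μ f' g h :=
  ci_symm (ci_congr_g hpart (ci_symm hci))

lemma ci_decomp {β' : Type*} [Fintype α] [Fintype β] [Fintype γ] [DecidableEq β'] {f : Ω → α} {g : Ω → β}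
    {h : Ω → γ} (e : β → β') (hci : CI μ f g h) : CI μ f (fun ω => e (g ω)) h := by
  intro a b' c
  have L1 : pmass μ (fun ω => (f ω, e (g ω), h ω)) (a, b', c)
      = ∑ b, if e b = b' then pmass μ (fun ω => (f ω, g ω, h ω)) (a, b, c) else 0 := by
    have r1 : pmass μ (fun ω => (f ω, e (g ω), h ω)) (a, b', c)
        = pmass μ (fun ω => (e (g ω), (f ω, h ω))) (b', (a, c)) :=
      pmass_congr fun ω => by simp only [Prod.mk.injEq]; try tauto
    rw [r1, pmass_split g e (fun ω => (f ω, h ω)) b' (a, c)]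
    refine Finset.sum_congr rfl fun b _ => ?_
    by_cases hb : e b = b'
    · rw [if_pos hb, if_pos hb]
      exact pmass_congr fun ω => by simp only [Prod.mk.injEq]; try tauto
    · rw [if_neg hb, if_neg hb]
  have L2 : pmass μ (fun ω => (e (g ω), h ω)) (b', c)
      = ∑ b, if e b = b' then pmass μ (fun ω => (g ω, h ω)) (b, c) else 0 :=
    pmass_split g e h b' c
  rw [L1, L2, Finset.sum_mul, Finset.mul_sum]
  refine Finset.sum_congr rfl fun b _ => ?_
  by_cases hb : e b = b'
  · rw [if_pos hb, if_pos hb, hci a b c]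
  · rw [if_neg hb, if_neg hb, zero_mul, mul_zero]


lemma ci_weak_union [Fintype α] [Fintype β] [Fintype γ] {β' : Type*} [Fintype β']
    [DecidableEq β'] (hμ0 : ∀ ω, 0 ≤ μ ω) {f : Ω → α} {g : Ω → β} {g' : Ω → β'} {h : Ω → γ}
    (hci : CI μ f (fun ω => (g ω, g' ω)) h) :
    CI μ f g' (fun ω => (g ω, h ω)) := by
  have H2 : CI μ f g h := ci_decomp (e := Prod.fst) hci
  intro a b' c
  obtain ⟨bg, ch⟩ := c
  have e1 : pmass μ (fun ω => (f ω, g' ω, (g ω, h ω))) (a, b', (bg, ch))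
      = pmass μ (fun ω => (f ω, (g ω, g' ω), h ω)) (a, (bg, b'), ch) :=
    pmass_congr fun ω => by simp only [Prod.mk.injEq]; try tauto
  have e2 : pmass μ (fun ω => (f ω, (g ω, h ω))) (a, (bg, ch))
      = pmass μ (fun ω => (f ω, g ω, h ω)) (a, bg, ch) :=
    pmass_congr fun ω => by simp only [Prod.mk.injEq]; try tauto
  have e3 : pmass μ (fun ω => (g' ω, (g ω, h ω))) (b', (bg, ch))
      = pmass μ (fun ω => ((g ω, g' ω), h ω)) ((bg, b'), ch) :=
    pmass_congr fun ω => by simp only [Prod.mk.injEq]; try tauto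
  rw [e1, e2, e3]
  set P1 := pmass μ (fun ω => (f ω, (g ω, g' ω), h ω)) (a, (bg, b'), ch) with hP1
  set Pg := pmass μ (fun ω => (g ω, h ω)) (bg, ch) with hPg
  set Pf := pmass μ (fun ω => (f ω, g ω, h ω)) (a, bg, ch) with hPf
  set Pgg := pmass μ (fun ω => ((g ω, g' ω), h ω)) ((bg, b'), ch) with hPgg
  set Ph := pmass μ h ch with hPh
  set Pfh := pmass μ (fun ω => (f ω, h ω)) (a, ch) with hPfh
  have H1 : P1 * Ph = Pfh * Pgg := hci a (bg, b') ch
  have H2' : Pf * Ph = Pfh * Pg := H2 a bg ch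
  by_cases hph : Ph = 0
  · have hg : Pg = 0 := le_antisymm
      (hph ▸ pmass_le_of_imp hμ0 (fun ω hc => congrArg Prod.snd hc))
      (pmass_nonneg hμ0 _ _)
    have hgg : Pgg = 0 := le_antisymm
      (hph ▸ pmass_le_of_imp hμ0 (fun ω hc => congrArg Prod.snd hc))
      (pmass_nonneg hμ0 _ _)
    rw [hg, hgg, mul_zero, mul_zero]
  · refine mul_right_cancel₀ hph ?_
    calc (P1 * Pg) * Ph = (P1 * Ph) * Pg := by ring
      _ = (Pfh * Pgg) * Pg := by rw [H1]
      _ = (Pfh * Pg) * Pgg := by ring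
      _ = (Pf * Ph) * Pgg := by rw [← H2']
      _ = (Pf * Pgg) * Ph := by ring

lemma ci_contract {α' : Type*} [DecidableEq α'] (hμ0 : ∀ ω, 0 ≤ μ ω)
    {f : Ω → α} {f' : Ω → α'} {g : Ω → β} {h : Ω → γ}
    (h1 : CI μ f g h) (h2 : CI μ f' g (fun ω => (f ω, h ω))) :
    CI μ (fun ω => (f ω, f' ω)) g h := by
  intro ab b c
  obtain ⟨a, a'⟩ := ab
  have e1 : pmass μ (fun ω => ((f ω, f' ω), g ω, h ω)) ((a, a'), b, c)
      = pmass μ (fun ω => (f' ω, g ω, (f ω, h ω))) (a', b, (a, c)) :=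
    pmass_congr fun ω => by simp only [Prod.mk.injEq]; try tauto
  have e2 : pmass μ (fun ω => ((f ω, f' ω), h ω)) ((a, a'), c)
      = pmass μ (fun ω => (f' ω, (f ω, h ω))) (a', (a, c)) :=
    pmass_congr fun ω => by simp only [Prod.mk.injEq]; try tauto
  have e3 : pmass μ (fun ω => (g ω, (f ω, h ω))) (b, (a, c))
      = pmass μ (fun ω => (f ω, g ω, h ω)) (a, b, c) :=
    pmass_congr fun ω => by simp only [Prod.mk.injEq]; try tauto
  rw [e1, e2]
  set T := pmass μ (fun ω => (f' ω, g ω, (f ω, h ω))) (a', b, (a, c)) with hT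
  set U := pmass μ (fun ω => (f' ω, (f ω, h ω))) (a', (a, c)) with hU
  set Pfgh := pmass μ (fun ω => (f ω, g ω, h ω)) (a, b, c) with hPfgh
  set Pfh := pmass μ (fun ω => (f ω, h ω)) (a, c) with hPfh
  set Ph := pmass μ h c with hPh
  set Pgh := pmass μ (fun ω => (g ω, h ω)) (b, c) with hPgh
  have H2' : T * Pfh = U * Pfgh := by
    have := h2 a' b (a, c)
    rw [e3] at this
    exact this
  have H1' : Pfgh * Ph = Pfh * Pgh := h1 a b c
  by_cases hfh : Pfh = 0
  · have hz1 : T = 0 := le_antisymm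
      (hfh ▸ pmass_le_of_imp hμ0 (fun ω hc => congrArg (fun x => x.2.2) hc))
      (pmass_nonneg hμ0 _ _)
    have hz2 : U = 0 := le_antisymm
      (hfh ▸ pmass_le_of_imp hμ0 (fun ω hc => congrArg (fun x => x.2) hc))
      (pmass_nonneg hμ0 _ _)
    rw [hz1, hz2, zero_mul, zero_mul]
  · refine mul_right_cancel₀ hfh ?_
    calc (T * Ph) * Pfh = (T * Pfh) * Ph := by ring
      _ = (U * Pfgh) * Ph := by rw [H2']
      _ = U * (Pfgh * Ph) := by ring
      _ = U * (Pfh * Pgh) := by rw [H1']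
      _ = (U * Pgh) * Pfh := by ring

lemma entropy_ci [Fintype α] [Fintype β] [Fintype γ] (hμ0 : ∀ ω, 0 ≤ μ ω)
    {f : Ω → α} {g : Ω → β} {h : Ω → γ} (hci : CI μ f g h) :
    entropy μ (fun ω => (f ω, h ω)) + entropy μ (fun ω => (g ω, h ω))
      = entropy μ (fun ω => (f ω, g ω, h ω)) + entropy μ h := by
  have E1 : entropy μ (fun ω => (f ω, h ω)) = ∑ d : α × β × γ,
      -(pmass μ (fun ω => (f ω, g ω, h ω)) d) *
        Real.log (pmass μ (fun ω => (f ω, h ω)) (d.1, d.2.2)) :=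
    entropy_comp_expand (fun ω => (f ω, g ω, h ω)) (fun x => (x.1, x.2.2))
  have E2 : entropy μ (fun ω => (g ω, h ω)) = ∑ d : α × β × γ,
      -(pmass μ (fun ω => (f ω, g ω, h ω)) d) *
        Real.log (pmass μ (fun ω => (g ω, h ω)) (d.2.1, d.2.2)) :=
    entropy_comp_expand (fun ω => (f ω, g ω, h ω)) (fun x => (x.2.1, x.2.2))
  have E3 : entropy μ (fun ω => (f ω, g ω, h ω)) = ∑ d : α × β × γ,
      -(pmass μ (fun ω => (f ω, g ω, h ω)) d) *
        Real.log (pmass μ (fun ω => (f ω, g ω, h ω)) d) :=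
    entropy_comp_expand (fun ω => (f ω, g ω, h ω)) (fun x => x)
  have E4 : entropy μ h = ∑ d : α × β × γ,
      -(pmass μ (fun ω => (f ω, g ω, h ω)) d) *
        Real.log (pmass μ h d.2.2) :=
    entropy_comp_expand (fun ω => (f ω, g ω, h ω)) (fun x => x.2.2)
  rw [E1, E2, E3, E4, ← Finset.sum_add_distrib, ← Finset.sum_add_distrib]
  refine Finset.sum_congr rfl fun d _ => ?_
  obtain ⟨a, b, c⟩ := d
  have hC := hci a b c
  set W := pmass μ (fun ω => (f ω, g ω, h ω)) (a, b, c) with hW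
  set Q1 := pmass μ (fun ω => (f ω, h ω)) (a, c) with hQ1
  set Q2 := pmass μ (fun ω => (g ω, h ω)) (b, c) with hQ2
  set Qc := pmass μ h c with hQc
  by_cases hw : W = 0
  · rw [hw]; ring
  · have hQ1n : Q1 ≠ 0 := by
      intro hz
      have hle : W ≤ Q1 := pmass_le_of_imp hμ0 (fun ω hc => congrArg (fun x => (x.1, x.2.2)) hc)
      exact hw (le_antisymm (hz ▸ hle) (pmass_nonneg hμ0 _ _))
    have hQcn : Qc ≠ 0 := by
      intro hz
      have hle : W ≤ Qc := pmass_le_of_imp hμ0 (fun ω hc => congrArg (fun x => x.2.2) hc)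
      exact hw (le_antisymm (hz ▸ hle) (pmass_nonneg hμ0 _ _))
    have hQ2n : Q2 ≠ 0 := by
      intro hz
      rw [hz, mul_zero] at hC
      exact mul_ne_zero hw hQcn hC
    have hlog : Real.log W + Real.log Qc = Real.log Q1 + Real.log Q2 := by
      rw [← Real.log_mul hw hQcn, ← Real.log_mul hQ1n hQ2n, hC]
    have := congrArg (fun t => -W * t) hlog
    simp only [mul_add] at this
    linarith

end Lib

lemma prefix_eq_iff {τ : Type*} {N m : ℕ} (hm : m ≤ N) {u u' : Fin N → τ} :
    ((fun j : Fin m => u (Fin.castLE hm j)) = fun j : Fin m => u' (Fin.castLE hm j)) ↔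
      ∀ k, k < m → ∀ hN : k < N, u ⟨k, hN⟩ = u' ⟨k, hN⟩ := by
  rw [funext_iff]
  constructor
  · intro H k hk hN
    exact H ⟨k, hk⟩
  · intro H j
    exact H j.1 j.2 _

lemma fin_zero_fun_eq {τ : Type*} {m : ℕ} (hm : m ≤ 0) (u v : Fin m → τ) : u = v :=
  funext fun j => absurd j.2 (by omega)

lemma fun_eq_iff {τ : Type*} {N : ℕ} {u u' : Fin N → τ} :
    u = u' ↔ ∀ k, k < N → ∀ hN : k < N, u ⟨k, hN⟩ = u' ⟨k, hN⟩ := by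
  rw [funext_iff]
  constructor
  · intro H k _ hN
    exact H ⟨k, hN⟩
  · intro H j
    exact H j.1 j.2 j.2


/-- If (i) `X₁^N` and `X₂^N` are independent (no feedback) and (ii) for each `i` the output
`Y_i` is conditionally independent of `(X₁^N, X₂^N)` given `(X₁^i, X₂^i, Y^{i-1})`
(causality of the channel), then
`I(X₁^N ; Y^N | X₂^N) = I(X₁^N → Y^N ‖ X₂^N) = ∑_{i=1}^N I(X₁^i ; Y_i | Y^{i-1}, X₂^i)`. -/
theorem condMutualInfo_eq_directedInfo_of_no_feedback
    {Ω 𝒳₁ 𝒳₂ 𝒴 : Type*} [Fintype Ω]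
    [Fintype 𝒳₁] [DecidableEq 𝒳₁] [Nonempty 𝒳₁]
    [Fintype 𝒳₂] [DecidableEq 𝒳₂] [Nonempty 𝒳₂]
    [Fintype 𝒴] [DecidableEq 𝒴] [Nonempty 𝒴]
    {N : ℕ} (hN : 1 ≤ N)
    (μ : Ω → ℝ) (hμ0 : ∀ ω, 0 ≤ μ ω) (hμ1 : ∑ ω, μ ω = 1)
    (X₁ : Ω → Fin N → 𝒳₁) (X₂ : Ω → Fin N → 𝒳₂) (Y : Ω → Fin N → 𝒴)
    (hIndep : ∀ (a : Fin N → 𝒳₁) (b : Fin N → 𝒳₂),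
      pmass μ (fun ω => (X₁ ω, X₂ ω)) (a, b) = pmass μ X₁ a * pmass μ X₂ b)
    (hCausal : ∀ i : Fin N, ∀ (yi : 𝒴) (a : Fin N → 𝒳₁) (b : Fin N → 𝒳₂)
      (c₁ : Fin ((i : ℕ) + 1) → 𝒳₁) (c₂ : Fin ((i : ℕ) + 1) → 𝒳₂) (c₃ : Fin (i : ℕ) → 𝒴),
      pmass μ (fun ω => (Y ω i, (X₁ ω, X₂ ω),
          ((fun j : Fin ((i : ℕ) + 1) => X₁ ω (Fin.castLE i.isLt j)),
           (fun j : Fin ((i : ℕ) + 1) => X₂ ω (Fin.castLE i.isLt j)),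
           (fun j : Fin (i : ℕ) => Y ω (Fin.castLE i.isLt.le j)))))
          (yi, (a, b), (c₁, c₂, c₃)) *
        pmass μ (fun ω =>
          ((fun j : Fin ((i : ℕ) + 1) => X₁ ω (Fin.castLE i.isLt j)),
           (fun j : Fin ((i : ℕ) + 1) => X₂ ω (Fin.castLE i.isLt j)),
           (fun j : Fin (i : ℕ) => Y ω (Fin.castLE i.isLt.le j)))) (c₁, c₂, c₃) =
      pmass μ (fun ω => (Y ω i,
          ((fun j : Fin ((i : ℕ) + 1) => X₁ ω (Fin.castLE i.isLt j)),
           (fun j : Fin ((i : ℕ) + 1) => X₂ ω (Fin.castLE i.isLt j)),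
           (fun j : Fin (i : ℕ) => Y ω (Fin.castLE i.isLt.le j))))) (yi, (c₁, c₂, c₃)) *
        pmass μ (fun ω => ((X₁ ω, X₂ ω),
          ((fun j : Fin ((i : ℕ) + 1) => X₁ ω (Fin.castLE i.isLt j)),
           (fun j : Fin ((i : ℕ) + 1) => X₂ ω (Fin.castLE i.isLt j)),
           (fun j : Fin (i : ℕ) => Y ω (Fin.castLE i.isLt.le j)))))
          ((a, b), (c₁, c₂, c₃))) :
    condMutualInfo μ X₁ Y X₂ =
      ∑ i : Fin N, condMutualInfo μ
        (fun ω => fun j : Fin ((i : ℕ) + 1) => X₁ ω (Fin.castLE i.isLt j))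
        (fun ω => Y ω i)
        (fun ω => ((fun j : Fin (i : ℕ) => Y ω (Fin.castLE i.isLt.le j)),
          (fun j : Fin ((i : ℕ) + 1) => X₂ ω (Fin.castLE i.isLt j)))) := by
  set T1 : ℕ → ℝ := fun n => entropy μ (fun ω =>
    ((fun j : Fin (min n N) => Y ω (Fin.castLE (min_le_right n N) j)), (X₁ ω, X₂ ω)))
    with hT1
  set T2 : ℕ → ℝ := fun n => entropy μ (fun ω =>
    ((fun j : Fin (min n N) => Y ω (Fin.castLE (min_le_right n N) j)), X₂ ω))
    with hT2
  -- the inductively derived "no feedback up to time n" conditional independence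
  have D : ∀ n, n ≤ N → CI μ
      (fun ω => (X₁ ω, fun j : Fin (min n N) => Y ω (Fin.castLE (min_le_right n N) j)))
      X₂
      (fun ω => fun j : Fin (min n N) => X₂ ω (Fin.castLE (min_le_right n N) j)) := by
    intro n
    induction n with
    | zero =>
      intro _
      have hm0 : min 0 N ≤ 0 := by omega
      rintro ⟨a₁, a₂⟩ b c
      have p1 : pmass μ (fun ω =>
          ((X₁ ω, fun j : Fin (min 0 N) => Y ω (Fin.castLE (min_le_right 0 N) j)), X₂ ω,
            fun j : Fin (min 0 N) => X₂ ω (Fin.castLE (min_le_right 0 N) j)))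
          ((a₁, a₂), b, c) = pmass μ (fun ω => (X₁ ω, X₂ ω)) (a₁, b) := by
        refine pmass_congr fun ω => ?_
        simp only [Prod.mk.injEq]
        constructor
        · rintro ⟨⟨h1, -⟩, h3, -⟩
          exact ⟨h1, h3⟩
        · rintro ⟨h1, h3⟩
          exact ⟨⟨h1, fin_zero_fun_eq hm0 _ _⟩, h3, fin_zero_fun_eq hm0 _ _⟩
      have p2 : pmass μ (fun ω =>
          fun j : Fin (min 0 N) => X₂ ω (Fin.castLE (min_le_right 0 N) j)) c = 1 := by
        unfold pmass
        rw [← hμ1]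
        refine Finset.sum_congr rfl fun ω _ => if_pos (fin_zero_fun_eq hm0 _ _)
      have p3 : pmass μ (fun ω =>
          ((X₁ ω, fun j : Fin (min 0 N) => Y ω (Fin.castLE (min_le_right 0 N) j)),
            fun j : Fin (min 0 N) => X₂ ω (Fin.castLE (min_le_right 0 N) j)))
          ((a₁, a₂), c) = pmass μ X₁ a₁ := by
        refine pmass_congr fun ω => ?_
        simp only [Prod.mk.injEq]
        constructor
        · rintro ⟨⟨h1, -⟩, -⟩
          exact h1
        · rintro h1
          exact ⟨⟨h1, fin_zero_fun_eq hm0 _ _⟩, fin_zero_fun_eq hm0 _ _⟩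
      have p4 : pmass μ (fun ω =>
          (X₂ ω, fun j : Fin (min 0 N) => X₂ ω (Fin.castLE (min_le_right 0 N) j)))
          (b, c) = pmass μ X₂ b := by
        refine pmass_congr fun ω => ?_
        simp only [Prod.mk.injEq]
        constructor
        · rintro ⟨h1, -⟩
          exact h1
        · rintro h1
          exact ⟨h1, fin_zero_fun_eq hm0 _ _⟩
      rw [p1, p2, p3, p4, mul_one, hIndep a₁ b]
    | succ n ih =>
      intro hn1
      have hn : n < N := hn1
      have Dn := ih hn.le
      set i : Fin N := ⟨n, hn⟩ with hidef
      have hiN : (i : ℕ) < N := hn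
      have hin : (i : ℕ) = n := rfl
      -- s1 : make the partner (B^{n+1}, X₂)
      have s1 : CI μ
          (fun ω => (X₁ ω, fun j : Fin (min n N) => Y ω (Fin.castLE (min_le_right n N) j)))
          (fun ω => ((fun j : Fin (min (n+1) N) => X₂ ω (Fin.castLE (min_le_right (n+1) N) j)),
            X₂ ω))
          (fun ω => fun j : Fin (min n N) => X₂ ω (Fin.castLE (min_le_right n N) j)) := by
        refine ci_congr_g (fun ω ω' => ?_) Dn
        simp only [Prod.mk.injEq, prefix_eq_iff]
        constructor
        · intro H
          exact ⟨fun k hk hN => congrFun H ⟨k, hN⟩, H⟩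
        · rintro ⟨-, H⟩
          exact H
      have s2 := ci_weak_union hμ0 s1
      have s3 : CI μ
          (fun ω => (X₁ ω, fun j : Fin (min n N) => Y ω (Fin.castLE (min_le_right n N) j)))
          X₂
          (fun ω => fun j : Fin (min (n+1) N) => X₂ ω (Fin.castLE (min_le_right (n+1) N) j)) := by
        refine ci_congr_h (fun ω ω' => ?_) s2
        simp only [Prod.mk.injEq, prefix_eq_iff]
        constructor
        · rintro ⟨H, -⟩
          exact H
        · intro H
          exact ⟨H, fun k hk hN => H k (by omega) hN⟩
      have s4 : CI μ (fun ω => Y ω i) (fun ω => (X₁ ω, X₂ ω))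
          (fun ω => ((fun j : Fin ((i : ℕ) + 1) => X₁ ω (Fin.castLE i.isLt j)),
            (fun j : Fin ((i : ℕ) + 1) => X₂ ω (Fin.castLE i.isLt j)),
            (fun j : Fin (i : ℕ) => Y ω (Fin.castLE i.isLt.le j)))) := by
        rintro yi ⟨a, b⟩ ⟨c₁, c₂, c₃⟩
        exact hCausal i yi a b c₁ c₂ c₃
      have s5 := ci_weak_union hμ0 s4
      have s6 : CI μ (fun ω => Y ω i) X₂
          (fun ω => ((X₁ ω, fun j : Fin (min n N) => Y ω (Fin.castLE (min_le_right n N) j)),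
            fun j : Fin (min (n+1) N) => X₂ ω (Fin.castLE (min_le_right (n+1) N) j))) := by
        refine ci_congr_h (fun ω ω' => ?_) s5
        simp only [Prod.mk.injEq, prefix_eq_iff]
        constructor
        · rintro ⟨h1, -, h3, h4⟩
          exact ⟨⟨h1, fun k hk hN => h4 k (by omega) hN⟩, fun k hk hN => h3 k (by omega) hN⟩
        · rintro ⟨⟨h1, h4⟩, h3⟩
          exact ⟨h1, fun k hk hN => congrFun h1 ⟨k, hN⟩, fun k hk hN => h3 k (by omega) hN,
            fun k hk hN => h4 k (by omega) hN⟩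
      have s7 := ci_contract hμ0 s3 s6
      refine ci_congr_f (fun ω ω' => ?_) s7
      simp only [Prod.mk.injEq, prefix_eq_iff]
      constructor
      · rintro ⟨⟨H1, H2⟩, H3⟩
        refine ⟨H1, fun k hk hN => ?_⟩
        by_cases hkn : k < n
        · exact H2 k (by omega) hN
        · have hki : k = (i : ℕ) := by omega
          subst hki
          exact H3
      · rintro ⟨H1, H2⟩
        exact ⟨⟨H1, fun k hk hN => H2 k (by omega) hN⟩, H2 (i : ℕ) (by omega) i.isLt⟩
  have key : ∀ i : Fin N, condMutualInfo μ
      (fun ω => fun j : Fin ((i : ℕ) + 1) => X₁ ω (Fin.castLE i.isLt j))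
      (fun ω => Y ω i)
      (fun ω => ((fun j : Fin (i : ℕ) => Y ω (Fin.castLE i.isLt.le j)),
        (fun j : Fin ((i : ℕ) + 1) => X₂ ω (Fin.castLE i.isLt j))))
      = (T2 ((i : ℕ) + 1) - T1 ((i : ℕ) + 1)) - (T2 (i : ℕ) - T1 (i : ℕ)) := by
    intro i
    have hiN : (i : ℕ) < N := i.isLt
    have hC : CI μ (fun ω => Y ω i) (fun ω => (X₁ ω, X₂ ω))
        (fun ω => ((fun j : Fin ((i : ℕ) + 1) => X₁ ω (Fin.castLE i.isLt j)),
          (fun j : Fin ((i : ℕ) + 1) => X₂ ω (Fin.castLE i.isLt j)),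
          (fun j : Fin (i : ℕ) => Y ω (Fin.castLE i.isLt.le j)))) := by
      rintro yi ⟨a, b⟩ ⟨c₁, c₂, c₃⟩
      exact hCausal i yi a b c₁ c₂ c₃
    have F1 : entropy μ (fun ω => (Y ω i,
          ((fun j : Fin ((i : ℕ) + 1) => X₁ ω (Fin.castLE i.isLt j)),
           (fun j : Fin ((i : ℕ) + 1) => X₂ ω (Fin.castLE i.isLt j)),
           (fun j : Fin (i : ℕ) => Y ω (Fin.castLE i.isLt.le j)))))
        + entropy μ (fun ω => ((X₁ ω, X₂ ω),
          ((fun j : Fin ((i : ℕ) + 1) => X₁ ω (Fin.castLE i.isLt j)),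
           (fun j : Fin ((i : ℕ) + 1) => X₂ ω (Fin.castLE i.isLt j)),
           (fun j : Fin (i : ℕ) => Y ω (Fin.castLE i.isLt.le j)))))
        = entropy μ (fun ω => (Y ω i, (X₁ ω, X₂ ω),
          ((fun j : Fin ((i : ℕ) + 1) => X₁ ω (Fin.castLE i.isLt j)),
           (fun j : Fin ((i : ℕ) + 1) => X₂ ω (Fin.castLE i.isLt j)),
           (fun j : Fin (i : ℕ) => Y ω (Fin.castLE i.isLt.le j)))))
        + entropy μ (fun ω =>
          ((fun j : Fin ((i : ℕ) + 1) => X₁ ω (Fin.castLE i.isLt j)),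
           (fun j : Fin ((i : ℕ) + 1) => X₂ ω (Fin.castLE i.isLt j)),
           (fun j : Fin (i : ℕ) => Y ω (Fin.castLE i.isLt.le j)))) :=
      entropy_ci hμ0 hC
    have c1 : entropy μ (fun ω => ((X₁ ω, X₂ ω),
          ((fun j : Fin ((i : ℕ) + 1) => X₁ ω (Fin.castLE i.isLt j)),
           (fun j : Fin ((i : ℕ) + 1) => X₂ ω (Fin.castLE i.isLt j)),
           (fun j : Fin (i : ℕ) => Y ω (Fin.castLE i.isLt.le j))))) = T1 (i : ℕ) := by
      rw [hT1]
      refine entropy_congr fun ω ω' => ?_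
      simp only [Prod.mk.injEq, prefix_eq_iff]
      constructor
      · rintro ⟨⟨h1, h2⟩, -, -, h5⟩
        exact ⟨fun k hk hN => h5 k (by omega) hN, h1, h2⟩
      · rintro ⟨h5, h1, h2⟩
        exact ⟨⟨h1, h2⟩, fun k hk hN => congrFun h1 ⟨k, hN⟩,
          fun k hk hN => congrFun h2 ⟨k, hN⟩, fun k hk hN => h5 k (by omega) hN⟩
    have c2 : entropy μ (fun ω => (Y ω i, (X₁ ω, X₂ ω),
          ((fun j : Fin ((i : ℕ) + 1) => X₁ ω (Fin.castLE i.isLt j)),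
           (fun j : Fin ((i : ℕ) + 1) => X₂ ω (Fin.castLE i.isLt j)),
           (fun j : Fin (i : ℕ) => Y ω (Fin.castLE i.isLt.le j))))) = T1 ((i : ℕ) + 1) := by
      rw [hT1]
      refine entropy_congr fun ω ω' => ?_
      simp only [Prod.mk.injEq, prefix_eq_iff]
      constructor
      · rintro ⟨hy, ⟨h1, h2⟩, -, -, h5⟩
        refine ⟨fun k hk hN => ?_, h1, h2⟩
        by_cases hkn : k < (i : ℕ)
        · exact h5 k (by omega) hN
        · have hki : k = (i : ℕ) := by omega
          subst hki
          exact hy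
      · rintro ⟨h5, h1, h2⟩
        exact ⟨h5 (i : ℕ) (by omega) i.isLt, ⟨h1, h2⟩,
          fun k hk hN => congrFun h1 ⟨k, hN⟩, fun k hk hN => congrFun h2 ⟨k, hN⟩,
          fun k hk hN => h5 k (by omega) hN⟩
    -- derived conditional independence Y_i ⟂ X₂ | (Y^{i-1}, X₂^i)
    have t1 : CI μ X₂
        (fun ω => (X₁ ω,
          fun j : Fin (min ((i : ℕ) + 1) N) => Y ω (Fin.castLE (min_le_right ((i : ℕ) + 1) N) j)))
        (fun ω =>
          fun j : Fin (min ((i : ℕ) + 1) N) => X₂ ω (Fin.castLE (min_le_right ((i : ℕ) + 1) N) j)) :=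
      ci_symm (D ((i : ℕ) + 1) i.isLt)
    have t2 := ci_decomp (e := fun x : (Fin N → 𝒳₁) × (Fin (min ((i : ℕ) + 1) N) → 𝒴) =>
      ((fun j : Fin (i : ℕ) => x.2 ⟨j.1, by have := j.isLt; omega⟩),
        x.2 ⟨(i : ℕ), by omega⟩)) t1
    have t2' : CI μ X₂
        (fun ω => ((fun j : Fin (i : ℕ) => Y ω (Fin.castLE i.isLt.le j)), Y ω i))
        (fun ω =>
          fun j : Fin (min ((i : ℕ) + 1) N) => X₂ ω (Fin.castLE (min_le_right ((i : ℕ) + 1) N) j)) :=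
      t2
    have t3 := ci_weak_union hμ0 t2'
    have t4 : CI μ X₂ (fun ω => Y ω i)
        (fun ω => ((fun j : Fin (i : ℕ) => Y ω (Fin.castLE i.isLt.le j)),
          (fun j : Fin ((i : ℕ) + 1) => X₂ ω (Fin.castLE i.isLt j)))) := by
      refine ci_congr_h (fun ω ω' => ?_) t3
      simp only [Prod.mk.injEq, prefix_eq_iff]
      constructor
      · rintro ⟨h1, h2⟩
        exact ⟨h1, fun k hk hN => h2 k (by omega) hN⟩
      · rintro ⟨h1, h2⟩
        exact ⟨h1, fun k hk hN => h2 k (by omega) hN⟩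
    have CI2 := ci_symm t4
    have F2 : entropy μ (fun ω => (Y ω i,
          ((fun j : Fin (i : ℕ) => Y ω (Fin.castLE i.isLt.le j)),
           (fun j : Fin ((i : ℕ) + 1) => X₂ ω (Fin.castLE i.isLt j)))))
        + entropy μ (fun ω => (X₂ ω,
          ((fun j : Fin (i : ℕ) => Y ω (Fin.castLE i.isLt.le j)),
           (fun j : Fin ((i : ℕ) + 1) => X₂ ω (Fin.castLE i.isLt j)))))
        = entropy μ (fun ω => (Y ω i, X₂ ω,
          ((fun j : Fin (i : ℕ) => Y ω (Fin.castLE i.isLt.le j)),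
           (fun j : Fin ((i : ℕ) + 1) => X₂ ω (Fin.castLE i.isLt j)))))
        + entropy μ (fun ω =>
          ((fun j : Fin (i : ℕ) => Y ω (Fin.castLE i.isLt.le j)),
           (fun j : Fin ((i : ℕ) + 1) => X₂ ω (Fin.castLE i.isLt j)))) :=
      entropy_ci hμ0 CI2
    have c3 : entropy μ (fun ω => (X₂ ω,
          ((fun j : Fin (i : ℕ) => Y ω (Fin.castLE i.isLt.le j)),
           (fun j : Fin ((i : ℕ) + 1) => X₂ ω (Fin.castLE i.isLt j))))) = T2 (i : ℕ) := by
      rw [hT2]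
      refine entropy_congr fun ω ω' => ?_
      simp only [Prod.mk.injEq, prefix_eq_iff]
      constructor
      · rintro ⟨h1, h2, -⟩
        exact ⟨fun k hk hN => h2 k (by omega) hN, h1⟩
      · rintro ⟨h2, h1⟩
        exact ⟨h1, fun k hk hN => h2 k (by omega) hN, fun k hk hN => congrFun h1 ⟨k, hN⟩⟩
    have c4 : entropy μ (fun ω => (Y ω i, X₂ ω,
          ((fun j : Fin (i : ℕ) => Y ω (Fin.castLE i.isLt.le j)),
           (fun j : Fin ((i : ℕ) + 1) => X₂ ω (Fin.castLE i.isLt j))))) = T2 ((i : ℕ) + 1) := by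
      rw [hT2]
      refine entropy_congr fun ω ω' => ?_
      simp only [Prod.mk.injEq, prefix_eq_iff]
      constructor
      · rintro ⟨hy, h1, h2, -⟩
        refine ⟨fun k hk hN => ?_, h1⟩
        by_cases hkn : k < (i : ℕ)
        · exact h2 k (by omega) hN
        · have hki : k = (i : ℕ) := by omega
          subst hki
          exact hy
      · rintro ⟨h2, h1⟩
        exact ⟨h2 (i : ℕ) (by omega) i.isLt, h1, fun k hk hN => h2 k (by omega) hN,
          fun k hk hN => congrFun h1 ⟨k, hN⟩⟩
    have c5 : entropy μ (fun ω =>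
          ((fun j : Fin ((i : ℕ) + 1) => X₁ ω (Fin.castLE i.isLt j)),
           ((fun j : Fin (i : ℕ) => Y ω (Fin.castLE i.isLt.le j)),
            (fun j : Fin ((i : ℕ) + 1) => X₂ ω (Fin.castLE i.isLt j)))))
        = entropy μ (fun ω =>
          ((fun j : Fin ((i : ℕ) + 1) => X₁ ω (Fin.castLE i.isLt j)),
           (fun j : Fin ((i : ℕ) + 1) => X₂ ω (Fin.castLE i.isLt j)),
           (fun j : Fin (i : ℕ) => Y ω (Fin.castLE i.isLt.le j)))) := by
      refine entropy_congr fun ω ω' => ?_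
      simp only [Prod.mk.injEq, prefix_eq_iff]
      tauto
    have c6 : entropy μ (fun ω =>
          (((fun j : Fin ((i : ℕ) + 1) => X₁ ω (Fin.castLE i.isLt j)), Y ω i),
           ((fun j : Fin (i : ℕ) => Y ω (Fin.castLE i.isLt.le j)),
            (fun j : Fin ((i : ℕ) + 1) => X₂ ω (Fin.castLE i.isLt j)))))
        = entropy μ (fun ω => (Y ω i,
          ((fun j : Fin ((i : ℕ) + 1) => X₁ ω (Fin.castLE i.isLt j)),
           (fun j : Fin ((i : ℕ) + 1) => X₂ ω (Fin.castLE i.isLt j)),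
           (fun j : Fin (i : ℕ) => Y ω (Fin.castLE i.isLt.le j))))) := by
      refine entropy_congr fun ω ω' => ?_
      simp only [Prod.mk.injEq, prefix_eq_iff]
      tauto
    unfold condMutualInfo
    linarith [F1, F2, c1, c2, c3, c4, c5, c6]
  calc condMutualInfo μ X₁ Y X₂
      = (T2 N - T1 N) - (T2 0 - T1 0) := by
        have eA1 : entropy μ (fun ω => (X₁ ω, X₂ ω)) = T1 0 := by
          rw [hT1]
          refine entropy_congr fun ω ω' => ?_
          simp only [Prod.mk.injEq, prefix_eq_iff]
          constructor
          · rintro ⟨h1, h2⟩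
            exact ⟨fun k hk hN => absurd hk (by omega), h1, h2⟩
          · rintro ⟨-, h1, h2⟩
            exact ⟨h1, h2⟩
        have eA2 : entropy μ (fun ω => (Y ω, X₂ ω)) = T2 N := by
          rw [hT2]
          refine entropy_congr fun ω ω' => ?_
          simp only [Prod.mk.injEq, prefix_eq_iff]
          constructor
          · rintro ⟨h1, h2⟩
            exact ⟨fun k hk hN => congrFun h1 ⟨k, hN⟩, h2⟩
          · rintro ⟨h1, h2⟩
            exact ⟨funext fun j => h1 j.1 (by omega) j.2, h2⟩
        have eA3 : entropy μ (fun ω => ((X₁ ω, Y ω), X₂ ω)) = T1 N := by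
          rw [hT1]
          refine entropy_congr fun ω ω' => ?_
          simp only [Prod.mk.injEq, prefix_eq_iff]
          constructor
          · rintro ⟨⟨h1, h2⟩, h3⟩
            exact ⟨fun k hk hN => congrFun h2 ⟨k, hN⟩, h1, h3⟩
          · rintro ⟨h2, h1, h3⟩
            exact ⟨⟨h1, funext fun j => h2 j.1 (by omega) j.2⟩, h3⟩
        have eA4 : entropy μ X₂ = T2 0 := by
          rw [hT2]
          refine entropy_congr fun ω ω' => ?_
          simp only [Prod.mk.injEq, prefix_eq_iff]
          constructor
          · rintro h1
            exact ⟨fun k hk hN => absurd hk (by omega), h1⟩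
          · rintro ⟨-, h1⟩
            exact h1
        unfold condMutualInfo
        linarith [eA1, eA2, eA3, eA4]
    _ = ∑ n ∈ Finset.range N, ((T2 (n + 1) - T1 (n + 1)) - (T2 n - T1 n)) :=
        (Finset.sum_range_sub (fun n => T2 n - T1 n) N).symm
    _ = ∑ i : Fin N, ((T2 ((i : ℕ) + 1) - T1 ((i : ℕ) + 1)) - (T2 (i : ℕ) - T1 (i : ℕ))) :=
        (Fin.sum_univ_eq_sum_range (fun n => (T2 (n + 1) - T1 (n + 1)) - (T2 n - T1 n)) N).symm
    _ = ∑ i : Fin N, condMutualInfo μ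
        (fun ω => fun j : Fin ((i : ℕ) + 1) => X₁ ω (Fin.castLE i.isLt j))
        (fun ω => Y ω i)
        (fun ω => ((fun j : Fin (i : ℕ) => Y ω (Fin.castLE i.isLt.le j)),
          (fun j : Fin ((i : ℕ) + 1) => X₂ ω (Fin.castLE i.isLt j)))) :=
      Finset.sum_congr rfl fun i _ => (key i).symm
end

section
/- Fix n ≥ 1 and finite nonempty sets 𝒳₁, 𝒳₂, 𝒴, and a causal channel specified by conditional pmfs p_i(y_i | x₁^i, x₂^i, y^{i−1}) for i = 1,…,n (each p_i(· | x₁^i, x₂^i, y^{i−1}) is a pmf on 𝒴 for every choice of the conditioning arguments). For any pair of causal input strategies, i.e. conditional pmfs q_{1,i}(x_{1,i} | x₁^{i−1}, y^{i−1}) and q_{2,i}(x_{2,i} | x₂^{i−1}, y^{i−1}), let μ be the induced joint pmf on 𝒳₁^n × 𝒳₂^n × 𝒴^n given by μ(x₁^n, x₂^n, y^n) = ∏_{i=1}^{n} q_{1,i}(x_{1,i}|x₁^{i−1},y^{i−1}) q_{2,i}(x_{2,i}|x₂^{i−1},y^{i−1}) p_i(y_i|x₁^i,x₂^i,y^{i−1}),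 and let I_μ(X₁^n, X₂^n → Y^n) := ∑_{i=1}^{n} I_μ((X₁^i, X₂^i) ; Y_i | Y^{i−1}) denote the directed information computed under μ with X₁, X₂, Y the coordinate projections. Suppose that I_μ(X₁^n, X₂^n → Y^n) = 0 for every pair of non-feedback strategies, i.e. strategies in which each q_{1,i} does not depend on y^{i−1} and each q_{2,i} does not depend on y^{i−1}. Then I_μ(X₁^n, X₂^n → Y^n) = 0 for every pair of causal (feedback-dependent) input strategies q_{1,i}(x_{1,i}|x₁^{i−1},y^{i−1}), q_{2,i}(x_{2,i}|x₂^{i−1},y^{i−1}). -/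
open Finset

set_option synthInstance.maxSize 1000

/-- The directed information `I(X₁^n, X₂^n → Y^n) = ∑_{i=1}^n I((X₁^i, X₂^i); Y_i | Y^{i-1})`
computed under the joint pmf `μ` on `𝒳₁^n × 𝒳₂^n × 𝒴^n`, where `X₁, X₂, Y` are the
coordinate projections. -/
noncomputable def directedInfo {𝒳₁ 𝒳₂ 𝒴 : Type*}
    [Fintype 𝒳₁] [DecidableEq 𝒳₁] [Fintype 𝒳₂] [DecidableEq 𝒳₂]
    [Fintype 𝒴] [DecidableEq 𝒴] {n : ℕ}
    (μ : (Fin n → 𝒳₁) × (Fin n → 𝒳₂) × (Fin n → 𝒴) → ℝ) : ℝ :=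
  ∑ i : Fin n, condMutualInfo μ
    (fun t => ((fun j : Fin ((i : ℕ) + 1) => t.1 (Fin.castLE i.isLt j)),
               (fun j : Fin ((i : ℕ) + 1) => t.2.1 (Fin.castLE i.isLt j))))
    (fun t => t.2.2 i)
    (fun t => fun j : Fin (i : ℕ) => t.2.2 (Fin.castLE i.isLt.le j))

/-- The joint pmf on `𝒳₁^n × 𝒳₂^n × 𝒴^n` induced by a pair of causal input strategies
`q₁, q₂` and the channel `p`:
`μ(x₁^n, x₂^n, y^n) = ∏_i q₁,ᵢ(x₁,ᵢ|x₁^{i-1},y^{i-1}) q₂,ᵢ(x₂,ᵢ|x₂^{i-1},y^{i-1})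
pᵢ(yᵢ|x₁^i,x₂^i,y^{i-1})`. -/
noncomputable def inducedLaw {𝒳₁ 𝒳₂ 𝒴 : Type*} {n : ℕ}
    (q₁ : Fin n → (Fin n → 𝒳₁) → (Fin n → 𝒴) → 𝒳₁ → ℝ)
    (q₂ : Fin n → (Fin n → 𝒳₂) → (Fin n → 𝒴) → 𝒳₂ → ℝ)
    (p : Fin n → (Fin n → 𝒳₁) → (Fin n → 𝒳₂) → (Fin n → 𝒴) → 𝒴 → ℝ) :
    (Fin n → 𝒳₁) × (Fin n → 𝒳₂) × (Fin n → 𝒴) → ℝ :=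
  fun t => ∏ i : Fin n,
    q₁ i t.1 t.2.2 (t.1 i) * q₂ i t.2.1 t.2.2 (t.2.1 i) * p i t.1 t.2.1 t.2.2 (t.2.2 i)

/-- `q` is a causal input strategy: each `q i` is a conditional pmf on `𝒳` which depends on
its arguments only through the strict prefixes `x^{i-1}` and `y^{i-1}`. -/
def IsStrategy {𝒳 𝒴 : Type*} [Fintype 𝒳] {n : ℕ}
    (q : Fin n → (Fin n → 𝒳) → (Fin n → 𝒴) → 𝒳 → ℝ) : Prop :=
  (∀ i x y a, 0 ≤ q i x y a) ∧ (∀ i x y, ∑ a, q i x y a = 1) ∧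
    (∀ i : Fin n, ∀ x x' y y', (∀ j : Fin n, (j : ℕ) < (i : ℕ) → x j = x' j) →
      (∀ j : Fin n, (j : ℕ) < (i : ℕ) → y j = y' j) → q i x y = q i x' y')

/-- `q` is a non-feedback strategy: `q i` does not depend on the past outputs `y^{i-1}`. -/
def NoFeedback {𝒳 𝒴 : Type*} {n : ℕ}
    (q : Fin n → (Fin n → 𝒳) → (Fin n → 𝒴) → 𝒳 → ℝ) : Prop :=
  ∀ i x y y', q i x y = q i x y'


/-! ### Auxiliary machinery -/

open Real

section CoreA
variable {α β γ : Type*} [Fintype α] [Fintype β] [Fintype γ]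



/-- The entropy combination `H(XZ)+H(YZ)-H(XYZ)-H(Z)` expressed through the joint pmf `P`. -/
noncomputable def Fcmi (P : α → β → γ → ℝ) : ℝ :=
  (∑ a, ∑ c, negMulLog (∑ b, P a b c)) + (∑ b, ∑ c, negMulLog (∑ a, P a b c))
    - (∑ a, ∑ b, ∑ c, negMulLog (P a b c)) - ∑ c, negMulLog (∑ a, ∑ b, P a b c)

lemma sum_rot (f : α → β → γ → ℝ) : ∑ b, ∑ c, ∑ a, f a b c = ∑ a, ∑ b, ∑ c, f a b c := by
  calc ∑ b, ∑ c, ∑ a, f a b c = ∑ b, ∑ a, ∑ c, f a b c :=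
        Finset.sum_congr rfl fun b _ => Finset.sum_comm
    _ = ∑ a, ∑ b, ∑ c, f a b c := Finset.sum_comm

variable (P : α → β → γ → ℝ)

lemma Fcmi_eq_sum : Fcmi P = ∑ a, ∑ b, ∑ c,
    P a b c * (Real.log (P a b c) + Real.log (∑ a', ∑ b', P a' b' c)
      - Real.log (∑ b', P a b' c) - Real.log (∑ a', P a' b c)) := by
  have hA : ∑ a, ∑ c, negMulLog (∑ b, P a b c)
      = ∑ a, ∑ b, ∑ c, -(P a b c * Real.log (∑ b', P a b' c)) := by
    refine Finset.sum_congr rfl fun a _ => ?_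
    rw [Finset.sum_comm]
    refine Finset.sum_congr rfl fun c _ => ?_
    rw [Finset.sum_neg_distrib, ← Finset.sum_mul, Real.negMulLog]; ring
  have hB : ∑ b, ∑ c, negMulLog (∑ a, P a b c)
      = ∑ a, ∑ b, ∑ c, -(P a b c * Real.log (∑ a', P a' b c)) := by
    rw [← sum_rot]
    refine Finset.sum_congr rfl fun b _ => Finset.sum_congr rfl fun c _ => ?_
    rw [Finset.sum_neg_distrib, ← Finset.sum_mul, Real.negMulLog]; ring
  have hD : ∑ c, negMulLog (∑ a, ∑ b, P a b c)
      = ∑ a, ∑ b, ∑ c, -(P a b c * Real.log (∑ a', ∑ b', P a' b' c)) := by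
    rw [← sum_rot, ← Finset.sum_comm (f := fun c b => ∑ a, -(P a b c * _))]
    refine Finset.sum_congr rfl fun c _ => ?_
    rw [show (∑ b, ∑ a, -(P a b c * Real.log (∑ a', ∑ b', P a' b' c)))
        = ∑ a, ∑ b, -(P a b c * Real.log (∑ a', ∑ b', P a' b' c)) from Finset.sum_comm]
    rw [show (∑ a, ∑ b, -(P a b c * Real.log (∑ a', ∑ b', P a' b' c)))
        = ∑ a, -((∑ b, P a b c) * Real.log (∑ a', ∑ b', P a' b' c)) from
      Finset.sum_congr rfl fun a _ => by rw [Finset.sum_neg_distrib, ← Finset.sum_mul]]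
    rw [Finset.sum_neg_distrib, ← Finset.sum_mul, Real.negMulLog]; ring
  rw [Fcmi, hA, hB, hD]
  simp only [← Finset.sum_sub_distrib, ← Finset.sum_add_distrib]
  refine Finset.sum_congr rfl fun a _ => Finset.sum_congr rfl fun b _ =>
    Finset.sum_congr rfl fun c _ => ?_
  rw [Real.negMulLog]; ring


local notation "Pac" => fun (a : α) (c : γ) => ∑ b', P a b' c
local notation "Pbc" => fun (b : β) (c : γ) => ∑ a', P a' b c
local notation "Pc" => fun (c : γ) => ∑ a', ∑ b', P a' b' c

noncomputable def qf : α → β → γ → ℝ := fun a b c =>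
  if (∑ a', ∑ b', P a' b' c) = 0 then 0 else (∑ b', P a b' c) * (∑ a', P a' b c) / (∑ a', ∑ b', P a' b' c)

lemma sum_rot' (f : α → β → γ → ℝ) : ∑ a, ∑ b, ∑ c, f a b c = ∑ c, ∑ a, ∑ b, f a b c :=
  sum_rot (fun c a b => f a b c)

variable (hP : ∀ a b c, 0 ≤ P a b c)
include hP

variable (hP : ∀ a b c, 0 ≤ P a b c)
include hP

lemma pac_nonneg (a c) : 0 ≤ Pac a c := Finset.sum_nonneg fun b _ => hP a b c
lemma pbc_nonneg (b c) : 0 ≤ Pbc b c := Finset.sum_nonneg fun a _ => hP a b c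
lemma pc_nonneg (c) : 0 ≤ Pc c := Finset.sum_nonneg fun a _ => pac_nonneg P hP a c
lemma qf_nonneg (a b c) : 0 ≤ qf P a b c := by
  unfold qf
  split
  · exact le_refl 0
  · exact div_nonneg (mul_nonneg (pac_nonneg P hP a c) (pbc_nonneg P hP b c)) (pc_nonneg P hP c)

lemma le_pac {a b c} : P a b c ≤ Pac a c :=
  Finset.single_le_sum (fun b' _ => hP a b' c) (Finset.mem_univ b)
lemma le_pbc {a b c} : P a b c ≤ Pbc b c :=
  Finset.single_le_sum (fun a' _ => hP a' b c) (Finset.mem_univ a)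
lemma pac_le_pc {a c} : Pac a c ≤ Pc c :=
  Finset.single_le_sum (fun a' _ => pac_nonneg P hP a' c) (Finset.mem_univ a)
lemma pbc_le_pc {b c} : Pbc b c ≤ Pc c := by
  have : Pc c = ∑ b', ∑ a', P a' b' c := Finset.sum_comm
  rw [this]
  exact Finset.single_le_sum (fun b' _ => pbc_nonneg P hP b' c) (Finset.mem_univ b)

/-- Per-term Gibbs inequality. -/
lemma gibbs_term (a b c) :
    P a b c - qf P a b c ≤ P a b c * (Real.log (P a b c) + Real.log (Pc c)
      - Real.log (Pac a c) - Real.log (Pbc b c)) := by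
  rcases eq_or_lt_of_le (hP a b c) with h0 | hpos
  · rw [← h0]; simpa using qf_nonneg P hP a b c
  · have hac : 0 < Pac a c := lt_of_lt_of_le hpos (le_pac P hP)
    have hbc : 0 < Pbc b c := lt_of_lt_of_le hpos (le_pbc P hP)
    have hc : 0 < Pc c := lt_of_lt_of_le hac (pac_le_pc P hP)
    have hq : qf P a b c = Pac a c * Pbc b c / Pc c := by
      unfold qf; rw [if_neg hc.ne']
    have hqpos : 0 < qf P a b c := by rw [hq]; positivity
    have hlog : Real.log (qf P a b c / P a b c) ≤ qf P a b c / P a b c - 1 :=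
      Real.log_le_sub_one_of_pos (by positivity)
    rw [Real.log_div hqpos.ne' hpos.ne'] at hlog
    have hlq : Real.log (qf P a b c) = Real.log (Pac a c) + Real.log (Pbc b c) - Real.log (Pc c) := by
      rw [hq, Real.log_div (by positivity) hc.ne', Real.log_mul hac.ne' hbc.ne']
    have h2 : P a b c * (Real.log (qf P a b c) - Real.log (P a b c)) ≤ qf P a b c - P a b c := by
      have := mul_le_mul_of_nonneg_left hlog hpos.le
      calc P a b c * (Real.log (qf P a b c) - Real.log (P a b c))
          ≤ P a b c * (qf P a b c / P a b c - 1) := this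
        _ = qf P a b c - P a b c := by field_simp
    rw [hlq] at h2; nlinarith [h2]

/-- Strict version used for the equality case. -/
lemma gibbs_term_eq (a b c)
    (heq : P a b c - qf P a b c = P a b c * (Real.log (P a b c) + Real.log (Pc c)
      - Real.log (Pac a c) - Real.log (Pbc b c))) :
    P a b c * Pc c = Pac a c * Pbc b c := by
  rcases eq_or_lt_of_le (pc_nonneg P hP c) with hc0 | hc
  · have h1 : Pac a c = 0 :=
      le_antisymm (hc0 ▸ pac_le_pc P hP) (pac_nonneg P hP a c)
    have h2 : P a b c = 0 := le_antisymm (h1 ▸ le_pac P hP) (hP a b c)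
    rw [h2, h1, zero_mul, zero_mul]
  rcases eq_or_lt_of_le (hP a b c) with h0 | hpos
  · -- P = 0 ⇒ qf = 0 ⇒ Pac * Pbc = 0
    rw [← h0, zero_mul, zero_sub, neg_eq_zero] at heq
    unfold qf at heq
    rw [if_neg hc.ne'] at heq
    have : Pac a c * Pbc b c = 0 := by
      field_simp at heq; rw [mul_zero] at heq; exact heq
    rw [← h0, zero_mul, this]
  · have hac : 0 < Pac a c := lt_of_lt_of_le hpos (le_pac P hP)
    have hbc : 0 < Pbc b c := lt_of_lt_of_le hpos (le_pbc P hP)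
    have hq : qf P a b c = Pac a c * Pbc b c / Pc c := by
      unfold qf; rw [if_neg hc.ne']
    have hqpos : 0 < qf P a b c := by rw [hq]; positivity
    by_contra hne
    have hne' : qf P a b c / P a b c ≠ 1 := by
      rw [hq]; intro h1
      apply hne
      field_simp at h1
      linarith [h1]
    have hlog : Real.log (qf P a b c / P a b c) < qf P a b c / P a b c - 1 :=
      Real.log_lt_sub_one_of_pos (by positivity) hne'
    rw [Real.log_div hqpos.ne' hpos.ne'] at hlog
    have hlq : Real.log (qf P a b c) = Real.log (Pac a c) + Real.log (Pbc b c) - Real.log (Pc c) := by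
      rw [hq, Real.log_div (by positivity) hc.ne', Real.log_mul hac.ne' hbc.ne']
    have h2 : P a b c * (Real.log (qf P a b c) - Real.log (P a b c)) < qf P a b c - P a b c := by
      have := mul_lt_mul_of_pos_left hlog hpos
      calc P a b c * (Real.log (qf P a b c) - Real.log (P a b c))
          < P a b c * (qf P a b c / P a b c - 1) := this
        _ = qf P a b c - P a b c := by field_simp
    rw [hlq] at h2; nlinarith [h2, heq]

/-- Total mass of `qf` matches that of `P`. -/
lemma qf_sum : ∑ a, ∑ b, ∑ c, qf P a b c = ∑ a, ∑ b, ∑ c, P a b c := by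
  rw [sum_rot' (qf P), sum_rot' P]
  refine Finset.sum_congr rfl fun c _ => ?_
  by_cases hc : (∑ a', ∑ b', P a' b' c) = 0
  · rw [hc]
    simp [qf, hc]
  · simp only [qf, if_neg hc]
    have h1 : ∑ a, ∑ b, (∑ b', P a b' c) * (∑ a', P a' b c) / (∑ a', ∑ b', P a' b' c)
        = (∑ a, ∑ b', P a b' c) * (∑ b, ∑ a', P a' b c) / (∑ a', ∑ b', P a' b' c) := by
      rw [Finset.sum_mul]
      rw [Finset.sum_div]
      refine Finset.sum_congr rfl fun a _ => ?_
      rw [Finset.mul_sum, Finset.sum_div]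
    rw [h1]
    have h2 : (∑ b, ∑ a', P a' b c) = ∑ a', ∑ b', P a' b' c := Finset.sum_comm
    rw [h2]
    field_simp




lemma sum_PsubQf : ∑ a, ∑ b, ∑ c, (P a b c - qf P a b c) = 0 := by
  simp only [Finset.sum_sub_distrib]
  rw [qf_sum P hP]
  ring

lemma Fcmi_nonneg : 0 ≤ Fcmi P := by
  rw [Fcmi_eq_sum P, ← sum_PsubQf P hP]
  refine Finset.sum_le_sum fun a _ => Finset.sum_le_sum fun b _ => Finset.sum_le_sum fun c _ => ?_
  exact gibbs_term P hP a b c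

omit hP in
lemma triple_sum_zero {f : α → β → γ → ℝ} (h0 : ∀ a b c, 0 ≤ f a b c)
    (hs : ∑ a, ∑ b, ∑ c, f a b c = 0) : ∀ a b c, f a b c = 0 := by
  intro a b c
  have h1 : ∀ a' ∈ Finset.univ, (0:ℝ) ≤ ∑ b', ∑ c', f a' b' c' :=
    fun a' _ => Finset.sum_nonneg fun b' _ => Finset.sum_nonneg fun c' _ => h0 a' b' c'
  have h2 := (Finset.sum_eq_zero_iff_of_nonneg h1).mp hs a (Finset.mem_univ a)
  have h3 := (Finset.sum_eq_zero_iff_of_nonneg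
    (fun b' _ => Finset.sum_nonneg fun c' _ => h0 a b' c')).mp h2 b (Finset.mem_univ b)
  exact (Finset.sum_eq_zero_iff_of_nonneg (fun c' _ => h0 a b c')).mp h3 c (Finset.mem_univ c)

lemma Fcmi_eq_zero_imp (h : Fcmi P = 0) :
    ∀ a b c, P a b c * (∑ a', ∑ b', P a' b' c) = (∑ b', P a b' c) * (∑ a', P a' b c) := by
  intro a b c
  refine gibbs_term_eq P hP a b c ?_
  have hz : ∑ a, ∑ b, ∑ c,
      (P a b c * (Real.log (P a b c) + Real.log (∑ a', ∑ b', P a' b' c)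
        - Real.log (∑ b', P a b' c) - Real.log (∑ a', P a' b c))
       - (P a b c - qf P a b c)) = 0 := by
    simp only [Finset.sum_sub_distrib]
    rw [← Fcmi_eq_sum P, h]
    have := sum_PsubQf P hP
    simp only [Finset.sum_sub_distrib] at this
    linarith
  have := triple_sum_zero (f := fun a b c =>
      P a b c * (Real.log (P a b c) + Real.log (∑ a', ∑ b', P a' b' c)
        - Real.log (∑ b', P a b' c) - Real.log (∑ a', P a' b c))
       - (P a b c - qf P a b c))
    (fun a b c => sub_nonneg.mpr (gibbs_term P hP a b c)) hz a b c
  linarith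

lemma Fcmi_eq_zero_of_factor
    (h : ∀ a b c, P a b c * (∑ a', ∑ b', P a' b' c) = (∑ b', P a b' c) * (∑ a', P a' b c)) :
    Fcmi P = 0 := by
  rw [Fcmi_eq_sum P]
  refine Finset.sum_eq_zero fun a _ => Finset.sum_eq_zero fun b _ => Finset.sum_eq_zero fun c _ => ?_
  rcases eq_or_lt_of_le (hP a b c) with h0 | hpos
  · rw [← h0, zero_mul]
  have hac : 0 < (∑ b', P a b' c) := lt_of_lt_of_le hpos (le_pac P hP)
  have hbc : 0 < (∑ a', P a' b c) := lt_of_lt_of_le hpos (le_pbc P hP)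
  have hc : 0 < (∑ a', ∑ b', P a' b' c) := lt_of_lt_of_le hac (pac_le_pc P hP)
  have hlogs : Real.log (P a b c) + Real.log (∑ a', ∑ b', P a' b' c)
      = Real.log (∑ b', P a b' c) + Real.log (∑ a', P a' b c) := by
    rw [← Real.log_mul hpos.ne' hc.ne', ← Real.log_mul hac.ne' hbc.ne', h a b c]
  rw [show (Real.log (P a b c) + Real.log (∑ a', ∑ b', P a' b' c)
      - Real.log (∑ b', P a b' c) - Real.log (∑ a', P a' b c)) = 0 by linarith, mul_zero]


end CoreA

section Bridge
variable {Ω α β γ : Type*} [Fintype Ω]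
  [Fintype α] [DecidableEq α] [Fintype β] [DecidableEq β] [Fintype γ] [DecidableEq γ]
  (μ : Ω → ℝ) (X : Ω → α) (Y : Ω → β) (Z : Ω → γ)

lemma pmass_nonneg_s5 {X : Ω → α} (hμ : ∀ ω, 0 ≤ μ ω) (a : α) : 0 ≤ pmass μ X a := by
  unfold pmass
  exact Finset.sum_nonneg fun ω _ => by by_cases h : X ω = a <;> simp [h, hμ ω]

lemma sum_rot'' {α' β' γ' : Type*} [Fintype α'] [Fintype β'] [Fintype γ'] (f : α' → β' → γ' → ℝ) :
    ∑ a, ∑ b, ∑ c, f a b c = ∑ c, ∑ a, ∑ b, f a b c := by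
  calc ∑ a, ∑ b, ∑ c, f a b c = ∑ a, ∑ c, ∑ b, f a b c :=
        Finset.sum_congr rfl fun a _ => Finset.sum_comm
    _ = ∑ c, ∑ a, ∑ b, f a b c := Finset.sum_comm

lemma pmass_marg_left (a : α) (c : γ) :
    pmass μ (fun ω => (X ω, Z ω)) (a, c)
      = ∑ b, pmass μ (fun ω => ((X ω, Y ω), Z ω)) ((a, b), c) := by
  unfold pmass
  rw [Finset.sum_comm]
  refine Finset.sum_congr rfl fun ω _ => ?_
  by_cases hx : X ω = a <;> by_cases hz : Z ω = c <;>
    simp [Prod.ext_iff, hx, hz, Finset.sum_ite_eq]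

lemma pmass_marg_right (b : β) (c : γ) :
    pmass μ (fun ω => (Y ω, Z ω)) (b, c)
      = ∑ a, pmass μ (fun ω => ((X ω, Y ω), Z ω)) ((a, b), c) := by
  unfold pmass
  rw [Finset.sum_comm]
  refine Finset.sum_congr rfl fun ω _ => ?_
  by_cases hy : Y ω = b <;> by_cases hz : Z ω = c <;>
    simp [Prod.ext_iff, hy, hz, Finset.sum_ite_eq]

lemma pmass_marg_z (c : γ) :
    pmass μ Z c = ∑ a, ∑ b, pmass μ (fun ω => ((X ω, Y ω), Z ω)) ((a, b), c) := by
  unfold pmass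
  rw [sum_rot'' (fun (a : α) (b : β) (ω : Ω) => if ((X ω, Y ω), Z ω) = ((a, b), c) then μ ω else 0)]
  refine Finset.sum_congr rfl fun ω _ => ?_
  by_cases hz : Z ω = c <;>
    simp [Prod.ext_iff, hz, ite_and, Finset.sum_ite_eq]

lemma condMutualInfo_eq_Fcmi :
    condMutualInfo μ X Y Z
      = Fcmi (fun a b c => pmass μ (fun ω => ((X ω, Y ω), Z ω)) ((a, b), c)) := by
  unfold condMutualInfo Fcmi entropy
  rw [show (∑ p : α × γ, negMulLog (pmass μ (fun ω => (X ω, Z ω)) p))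
      = ∑ a, ∑ c, negMulLog (pmass μ (fun ω => (X ω, Z ω)) (a, c)) from
    Fintype.sum_prod_type _]
  rw [show (∑ p : β × γ, negMulLog (pmass μ (fun ω => (Y ω, Z ω)) p))
      = ∑ b, ∑ c, negMulLog (pmass μ (fun ω => (Y ω, Z ω)) (b, c)) from
    Fintype.sum_prod_type _]
  rw [show (∑ p : (α × β) × γ, negMulLog (pmass μ (fun ω => ((X ω, Y ω), Z ω)) p))
      = ∑ a, ∑ b, ∑ c, negMulLog (pmass μ (fun ω => ((X ω, Y ω), Z ω)) ((a, b), c)) from by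
    rw [Fintype.sum_prod_type]
    rw [Fintype.sum_prod_type]]
  simp only [pmass_marg_left μ X Y Z, pmass_marg_right μ X Y Z, pmass_marg_z μ X Y Z]


end Bridge

lemma sum_swap4 {A B C S : Type*} [Fintype A] [Fintype B] [Fintype C] [Fintype S]
    (f : S → A → B → C → ℝ) :
    ∑ s, ∑ a, ∑ b, ∑ c, f s a b c = ∑ a, ∑ b, ∑ c, ∑ s, f s a b c := by
  rw [Finset.sum_comm]
  refine Finset.sum_congr rfl fun a _ => ?_
  rw [Finset.sum_comm]
  refine Finset.sum_congr rfl fun b _ => ?_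
  exact Finset.sum_comm

section Marg
variable {𝒳₁ 𝒳₂ 𝒴 : Type*}
    [Fintype 𝒳₁] [DecidableEq 𝒳₁] [Nonempty 𝒳₁]
    [Fintype 𝒳₂] [DecidableEq 𝒳₂] [Nonempty 𝒳₂]
    [Fintype 𝒴] [DecidableEq 𝒴] [Nonempty 𝒴]
    {n : ℕ}
    (q₁ : Fin n → (Fin n → 𝒳₁) → (Fin n → 𝒴) → 𝒳₁ → ℝ)
    (q₂ : Fin n → (Fin n → 𝒳₂) → (Fin n → 𝒴) → 𝒳₂ → ℝ)
    (p : Fin n → (Fin n → 𝒳₁) → (Fin n → 𝒳₂) → (Fin n → 𝒴) → 𝒴 → ℝ)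

/-- The `j`-th factor of the induced law. -/
noncomputable def Gfac (t : (Fin n → 𝒳₁) × (Fin n → 𝒳₂) × (Fin n → 𝒴)) (j : Fin n) : ℝ :=
  q₁ j t.1 t.2.2 (t.1 j) * q₂ j t.2.1 t.2.2 (t.2.1 j) * p j t.1 t.2.1 t.2.2 (t.2.2 j)

lemma inducedLaw_eq_prod (t) : inducedLaw q₁ q₂ p t = ∏ j : Fin n, Gfac q₁ q₂ p t j := rfl

/-- Agreement of two sample points on all coordinates `< m`. -/
def AgreeLt (m : ℕ) (s t : (Fin n → 𝒳₁) × (Fin n → 𝒳₂) × (Fin n → 𝒴)) : Prop :=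
  ∀ j : Fin n, (j : ℕ) < m → s.1 j = t.1 j ∧ s.2.1 j = t.2.1 j ∧ s.2.2 j = t.2.2 j

instance (m : ℕ) (s t : (Fin n → 𝒳₁) × (Fin n → 𝒳₂) × (Fin n → 𝒴)) :
    Decidable (AgreeLt m s t) := by unfold AgreeLt; infer_instance

variable (hq₁ : IsStrategy q₁) (hq₂ : IsStrategy q₂)
    (hp1 : ∀ i x₁ x₂ y, ∑ b, p i x₁ x₂ y b = 1)
    (hpCausal : ∀ i : Fin n, ∀ x₁ x₁' x₂ x₂' y y',
      (∀ j : Fin n, (j : ℕ) ≤ (i : ℕ) → x₁ j = x₁' j) →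
      (∀ j : Fin n, (j : ℕ) ≤ (i : ℕ) → x₂ j = x₂' j) →
      (∀ j : Fin n, (j : ℕ) < (i : ℕ) → y j = y' j) →
      p i x₁ x₂ y = p i x₁' x₂' y')
include hq₁ hq₂ hp1 hpCausal

/-- Factors below `m` are unchanged by modifying coordinates `≥ m`. -/
lemma Gfac_congr (m : ℕ) (s t : (Fin n → 𝒳₁) × (Fin n → 𝒳₂) × (Fin n → 𝒴))
    (h : AgreeLt m s t) (j : Fin n) (hj : (j : ℕ) < m) :
    Gfac q₁ q₂ p s j = Gfac q₁ q₂ p t j := by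
  unfold Gfac
  have h1 : q₁ j s.1 s.2.2 = q₁ j t.1 t.2.2 :=
    hq₁.2.2 j s.1 t.1 s.2.2 t.2.2 (fun k hk => (h k (lt_trans hk hj)).1)
      (fun k hk => (h k (lt_trans hk hj)).2.2)
  have h2 : q₂ j s.2.1 s.2.2 = q₂ j t.2.1 t.2.2 :=
    hq₂.2.2 j s.2.1 t.2.1 s.2.2 t.2.2 (fun k hk => (h k (lt_trans hk hj)).2.1)
      (fun k hk => (h k (lt_trans hk hj)).2.2)
  have h3 : p j s.1 s.2.1 s.2.2 = p j t.1 t.2.1 t.2.2 :=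
    hpCausal j s.1 t.1 s.2.1 t.2.1 s.2.2 t.2.2
      (fun k hk => (h k (lt_of_le_of_lt hk hj)).1)
      (fun k hk => (h k (lt_of_le_of_lt hk hj)).2.1)
      (fun k hk => (h k (lt_trans hk hj)).2.2)
  rw [h1, h2, h3, (h j hj).1, (h j hj).2.1, (h j hj).2.2]

/-- Key marginalization lemma: summing the induced law over all points agreeing with `t`
on coordinates `< m` yields the product of the first `m` factors. -/
lemma marg : ∀ d m, m + d = n → ∀ t,
    (∑ s : (Fin n → 𝒳₁) × (Fin n → 𝒳₂) × (Fin n → 𝒴),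
      if AgreeLt m s t then inducedLaw q₁ q₂ p s else 0)
    = ∏ j ∈ Finset.univ.filter (fun j : Fin n => (j : ℕ) < m), Gfac q₁ q₂ p t j := by
  intro d
  induction d with
  | zero =>
    intro m hm t
    have hiff : ∀ s, AgreeLt m s t ↔ s = t := by
      intro s
      constructor
      · intro h
        have h1 : s.1 = t.1 := funext fun j => (h j (by omega)).1
        have h2 : s.2.1 = t.2.1 := funext fun j => (h j (by omega)).2.1
        have h3 : s.2.2 = t.2.2 := funext fun j => (h j (by omega)).2.2
        exact Prod.ext h1 (Prod.ext h2 h3)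
      · rintro rfl; exact fun j _ => ⟨rfl, rfl, rfl⟩
    rw [show (Finset.univ.filter (fun j : Fin n => (j : ℕ) < m)) = Finset.univ from
      Finset.filter_true_of_mem fun j _ => by omega]
    calc (∑ s, if AgreeLt m s t then inducedLaw q₁ q₂ p s else 0)
        = ∑ s, if s = t then inducedLaw q₁ q₂ p s else 0 :=
          Finset.sum_congr rfl fun s _ => if_congr (hiff s) rfl rfl
      _ = inducedLaw q₁ q₂ p t := by rw [Finset.sum_ite_eq' Finset.univ t (inducedLaw q₁ q₂ p), if_pos (Finset.mem_univ t)]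
      _ = ∏ j ∈ Finset.univ, Gfac q₁ q₂ p t j := inducedLaw_eq_prod _ _ _ _
  | succ d ih =>
    intro m hm t
    have hmn : m < n := by omega
    set i : Fin n := ⟨m, hmn⟩ with hi
    set upd : 𝒳₁ → 𝒳₂ → 𝒴 → (Fin n → 𝒳₁) × (Fin n → 𝒳₂) × (Fin n → 𝒴) :=
      fun a b c => (Function.update t.1 i a, Function.update t.2.1 i b,
        Function.update t.2.2 i c) with hupd
    -- step 1: partition by the value at coordinate m
    have key : ∀ s, (if AgreeLt m s t then inducedLaw q₁ q₂ p s else 0)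
        = ∑ a, ∑ b, ∑ c, if AgreeLt (m+1) s (upd a b c) then inducedLaw q₁ q₂ p s else 0 := by
      intro s
      have hiff : ∀ a b c, AgreeLt (m+1) s (upd a b c)
          ↔ AgreeLt m s t ∧ (s.1 i = a ∧ s.2.1 i = b ∧ s.2.2 i = c) := by
        intro a b c
        constructor
        · intro h
          refine ⟨fun j hj => ?_, ?_⟩
          · have him : (i : ℕ) = m := rfl
            have hne : j ≠ i := Fin.ne_of_val_ne (by omega)
            have := h j (by omega)
            simpa [hupd, Function.update_of_ne hne] using this
          · have him : (i : ℕ) = m := rfl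
            have := h i (by omega)
            simpa [hupd] using this
        · rintro ⟨h1, h2, h3, h4⟩ j hj
          rcases Nat.lt_or_ge (j : ℕ) m with hj' | hj'
          · have him : (i : ℕ) = m := rfl
            have hne : j ≠ i := Fin.ne_of_val_ne (by omega)
            simpa [hupd, Function.update_of_ne hne] using h1 j hj'
          · have him : (i : ℕ) = m := rfl
            have hji : j = i := Fin.ext (by omega)
            subst hji
            simp [hupd, h2, h3, h4]
      calc (if AgreeLt m s t then inducedLaw q₁ q₂ p s else 0)
          = ∑ a, ∑ b, ∑ c, if AgreeLt m s t ∧ (s.1 i = a ∧ s.2.1 i = b ∧ s.2.2 i = c)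
              then inducedLaw q₁ q₂ p s else 0 := by
            by_cases h : AgreeLt m s t <;> simp [h, ite_and, Finset.sum_ite_eq]
        _ = ∑ a, ∑ b, ∑ c, if AgreeLt (m+1) s (upd a b c) then inducedLaw q₁ q₂ p s else 0 :=
            Finset.sum_congr rfl fun a _ => Finset.sum_congr rfl fun b _ =>
              Finset.sum_congr rfl fun c _ => if_congr (hiff a b c).symm rfl rfl
    have him : (i : ℕ) = m := rfl
    -- rewrite the sum using the partition, then swap and apply the IH
    have h0 : (∑ s, if AgreeLt m s t then inducedLaw q₁ q₂ p s else 0)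
        = ∑ s, ∑ a, ∑ b, ∑ c, if AgreeLt (m+1) s (upd a b c)
            then inducedLaw q₁ q₂ p s else 0 :=
      Finset.sum_congr rfl fun s _ => key s
    rw [h0]
    have h1 : (∑ s : (Fin n → 𝒳₁) × (Fin n → 𝒳₂) × (Fin n → 𝒴),
          ∑ a, ∑ b, ∑ c, if AgreeLt (m+1) s (upd a b c) then inducedLaw q₁ q₂ p s else 0)
        = ∑ a, ∑ b, ∑ c, ∑ s : (Fin n → 𝒳₁) × (Fin n → 𝒳₂) × (Fin n → 𝒴),
            if AgreeLt (m+1) s (upd a b c) then inducedLaw q₁ q₂ p s else 0 := sum_swap4 _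
    rw [h1]
    have hih : ∀ a b c, (∑ s, if AgreeLt (m+1) s (upd a b c) then inducedLaw q₁ q₂ p s else 0)
        = ∏ j ∈ Finset.univ.filter (fun j : Fin n => (j : ℕ) < m + 1),
            Gfac q₁ q₂ p (upd a b c) j :=
      fun a b c => ih (m+1) (by omega) (upd a b c)
    have hfilter : Finset.univ.filter (fun j : Fin n => (j : ℕ) < m + 1)
        = insert i (Finset.univ.filter (fun j : Fin n => (j : ℕ) < m)) := by
      ext j
      simp only [Finset.mem_filter, Finset.mem_insert, Finset.mem_univ, true_and, Fin.ext_iff, him]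
      omega
    have hinotmem : i ∉ Finset.univ.filter (fun j : Fin n => (j : ℕ) < m) := by
      simp [him]
    have hprod : ∀ a b c, (∏ j ∈ Finset.univ.filter (fun j : Fin n => (j : ℕ) < m + 1),
          Gfac q₁ q₂ p (upd a b c) j)
        = Gfac q₁ q₂ p (upd a b c) i * ∏ j ∈ Finset.univ.filter (fun j : Fin n => (j : ℕ) < m),
            Gfac q₁ q₂ p t j := by
      intro a b c
      rw [hfilter, Finset.prod_insert hinotmem]
      congr 1
      refine Finset.prod_congr rfl fun j hj => ?_
      have hjm : (j : ℕ) < m := (Finset.mem_filter.mp hj).2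
      refine Gfac_congr q₁ q₂ p hq₁ hq₂ hp1 hpCausal m (upd a b c) t ?_ j hjm
      intro k hk
      have hki : k ≠ i := Fin.ne_of_val_ne (by omega)
      simp [hupd, Function.update_of_ne hki]
    have hGi : ∀ a b c, Gfac q₁ q₂ p (upd a b c) i
        = q₁ i t.1 t.2.2 a * q₂ i t.2.1 t.2.2 b
            * p i (Function.update t.1 i a) (Function.update t.2.1 i b) t.2.2 c := by
      intro a b c
      unfold Gfac
      have e1 : (upd a b c).1 i = a := by simp [hupd]
      have e2 : (upd a b c).2.1 i = b := by simp [hupd]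
      have e3 : (upd a b c).2.2 i = c := by simp [hupd]
      have hy : ∀ k : Fin n, (k : ℕ) < (i : ℕ) → (upd a b c).2.2 k = t.2.2 k := by
        intro k hk
        have hki : k ≠ i := Fin.ne_of_val_ne (by omega)
        simp [hupd, Function.update_of_ne hki]
      have hq1e : q₁ i (upd a b c).1 (upd a b c).2.2 = q₁ i t.1 t.2.2 := by
        refine hq₁.2.2 i _ _ _ _ (fun k hk => ?_) hy
        have hki : k ≠ i := Fin.ne_of_val_ne (by omega)
        simp [hupd, Function.update_of_ne hki]
      have hq2e : q₂ i (upd a b c).2.1 (upd a b c).2.2 = q₂ i t.2.1 t.2.2 := by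
        refine hq₂.2.2 i _ _ _ _ (fun k hk => ?_) hy
        have hki : k ≠ i := Fin.ne_of_val_ne (by omega)
        simp [hupd, Function.update_of_ne hki]
      have hpe : p i (upd a b c).1 (upd a b c).2.1 (upd a b c).2.2
          = p i (Function.update t.1 i a) (Function.update t.2.1 i b) t.2.2 := by
        refine hpCausal i _ _ _ _ _ _ (fun k _ => by simp [hupd]) (fun k _ => by simp [hupd]) hy
      rw [hq1e, hq2e, hpe, e1, e2, e3]
    -- now compute the triple sum
    calc (∑ a, ∑ b, ∑ c, ∑ s, if AgreeLt (m+1) s (upd a b c) then inducedLaw q₁ q₂ p s else 0)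
        = ∑ a, ∑ b, ∑ c, (q₁ i t.1 t.2.2 a * q₂ i t.2.1 t.2.2 b
            * p i (Function.update t.1 i a) (Function.update t.2.1 i b) t.2.2 c
            * ∏ j ∈ Finset.univ.filter (fun j : Fin n => (j : ℕ) < m), Gfac q₁ q₂ p t j) := by
          refine Finset.sum_congr rfl fun a _ => Finset.sum_congr rfl fun b _ =>
            Finset.sum_congr rfl fun c _ => ?_
          rw [hih a b c, hprod a b c, hGi a b c]
      _ = ∑ a, ∑ b, (q₁ i t.1 t.2.2 a * q₂ i t.2.1 t.2.2 b
            * ∏ j ∈ Finset.univ.filter (fun j : Fin n => (j : ℕ) < m), Gfac q₁ q₂ p t j) := by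
          refine Finset.sum_congr rfl fun a _ => Finset.sum_congr rfl fun b _ => ?_
          rw [show (∑ c, (q₁ i t.1 t.2.2 a * q₂ i t.2.1 t.2.2 b
              * p i (Function.update t.1 i a) (Function.update t.2.1 i b) t.2.2 c
              * ∏ j ∈ Finset.univ.filter (fun j : Fin n => (j : ℕ) < m), Gfac q₁ q₂ p t j))
            = (q₁ i t.1 t.2.2 a * q₂ i t.2.1 t.2.2 b
              * ∏ j ∈ Finset.univ.filter (fun j : Fin n => (j : ℕ) < m), Gfac q₁ q₂ p t j)
              * ∑ c, p i (Function.update t.1 i a) (Function.update t.2.1 i b) t.2.2 c from by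
            rw [Finset.mul_sum]
            exact Finset.sum_congr rfl fun c _ => by ring]
          rw [hp1]
          ring
      _ = (∑ a, q₁ i t.1 t.2.2 a) * (∑ b, q₂ i t.2.1 t.2.2 b)
            * ∏ j ∈ Finset.univ.filter (fun j : Fin n => (j : ℕ) < m), Gfac q₁ q₂ p t j := by
          rw [Finset.sum_mul, Finset.sum_mul]
          refine Finset.sum_congr rfl fun a _ => ?_
          rw [Finset.mul_sum, Finset.sum_mul]
      _ = ∏ j ∈ Finset.univ.filter (fun j : Fin n => (j : ℕ) < m), Gfac q₁ q₂ p t j := by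
          rw [hq₁.2.1, hq₂.2.1]
          ring

end Marg


section Prefix
variable {𝒳₁ 𝒳₂ 𝒴 : Type*}
    [Fintype 𝒳₁] [DecidableEq 𝒳₁] [Nonempty 𝒳₁]
    [Fintype 𝒳₂] [DecidableEq 𝒳₂] [Nonempty 𝒳₂]
    [Fintype 𝒴] [DecidableEq 𝒴] [Nonempty 𝒴]
    {n : ℕ}

/-- Extend a prefix tuple to a full tuple by junk values. -/
noncomputable def extF {𝒳 : Type*} [Nonempty 𝒳] (m : ℕ) (a : Fin m → 𝒳) : Fin n → 𝒳 :=
  fun j => if h : (j : ℕ) < m then a ⟨j, h⟩ else Classical.arbitrary 𝒳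

/-- Extend `(c, b)` (a `y`-prefix of length `m` and a value at position `m`). -/
noncomputable def extYb (m : ℕ) (b : 𝒴) (c : Fin m → 𝒴) : Fin n → 𝒴 :=
  fun j => if h : (j : ℕ) < m then c ⟨j, h⟩ else if (j : ℕ) = m then b else Classical.arbitrary 𝒴

lemma cond_iff (i : Fin n) (a : (Fin ((i:ℕ)+1) → 𝒳₁) × (Fin ((i:ℕ)+1) → 𝒳₂)) (b : 𝒴)
    (c : Fin (i:ℕ) → 𝒴) (t : (Fin n → 𝒳₁) × (Fin n → 𝒳₂) × (Fin n → 𝒴)) :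
    ((((fun j : Fin ((i:ℕ)+1) => t.1 (Fin.castLE i.isLt j)),
        (fun j : Fin ((i:ℕ)+1) => t.2.1 (Fin.castLE i.isLt j))), t.2.2 i),
      (fun j : Fin (i:ℕ) => t.2.2 (Fin.castLE i.isLt.le j))) = ((a, b), c)
    ↔ AgreeLt ((i:ℕ)+1) t (extF ((i:ℕ)+1) a.1, extF ((i:ℕ)+1) a.2, extYb (i:ℕ) b c) := by
  simp only [Prod.ext_iff]
  constructor
  · rintro ⟨⟨⟨h1, h2⟩, h3⟩, h4⟩ j hj
    refine ⟨?_, ?_, ?_⟩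
    · have := congrFun h1 ⟨(j:ℕ), hj⟩
      rw [show Fin.castLE i.isLt ⟨(j:ℕ), hj⟩ = j from Fin.ext rfl] at this
      simp only [extF, dif_pos hj]
      exact this
    · have := congrFun h2 ⟨(j:ℕ), hj⟩
      rw [show Fin.castLE i.isLt ⟨(j:ℕ), hj⟩ = j from Fin.ext rfl] at this
      simp only [extF, dif_pos hj]
      exact this
    · rcases Nat.lt_or_ge (j:ℕ) (i:ℕ) with hj' | hj'
      · have := congrFun h4 ⟨(j:ℕ), hj'⟩
        rw [show Fin.castLE i.isLt.le ⟨(j:ℕ), hj'⟩ = j from Fin.ext rfl] at this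
        simp only [extYb, dif_pos hj']
        exact this
      · have hji : (j:ℕ) = (i:ℕ) := by omega
        have : j = i := Fin.ext hji
        subst this
        simp only [extYb, dif_neg (by omega : ¬ (j:ℕ) < (j:ℕ)), if_pos rfl]
        exact h3
  · intro h
    refine ⟨⟨⟨funext fun j' => ?_, funext fun j' => ?_⟩, ?_⟩, funext fun j' => ?_⟩
    · have := (h (Fin.castLE i.isLt j') j'.isLt).1
      rw [this]
      simp only [extF]
      rw [dif_pos (show ((Fin.castLE i.isLt j' : Fin n) : ℕ) < (i:ℕ)+1 from j'.isLt)]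
      exact congrArg a.1 (Fin.ext rfl)
    · have := (h (Fin.castLE i.isLt j') j'.isLt).2.1
      rw [this]
      simp only [extF]
      rw [dif_pos (show ((Fin.castLE i.isLt j' : Fin n) : ℕ) < (i:ℕ)+1 from j'.isLt)]
      exact congrArg a.2 (Fin.ext rfl)
    · have := (h i (by omega)).2.2
      rw [this]
      simp only [extYb]
      rw [dif_neg (by omega : ¬ (i:ℕ) < (i:ℕ))]
      simp
    · have := (h (Fin.castLE i.isLt.le j') (by exact lt_trans j'.isLt (by omega))).2.2
      rw [this]
      simp only [extYb]
      rw [dif_pos (show ((Fin.castLE i.isLt.le j' : Fin n) : ℕ) < (i:ℕ) from j'.isLt)]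
      exact congrArg c (Fin.ext rfl)

end Prefix


section Products
variable {𝒳₁ 𝒳₂ 𝒴 : Type*}
    [Fintype 𝒳₁] [DecidableEq 𝒳₁] [Nonempty 𝒳₁]
    [Fintype 𝒳₂] [DecidableEq 𝒳₂] [Nonempty 𝒳₂]
    [Fintype 𝒴] [DecidableEq 𝒴] [Nonempty 𝒴]
    {n : ℕ}
    (q₁ : Fin n → (Fin n → 𝒳₁) → (Fin n → 𝒴) → 𝒳₁ → ℝ)
    (q₂ : Fin n → (Fin n → 𝒳₂) → (Fin n → 𝒴) → 𝒳₂ → ℝ)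
    (p : Fin n → (Fin n → 𝒳₁) → (Fin n → 𝒳₂) → (Fin n → 𝒴) → 𝒴 → ℝ)

/-- The input-strategy part of the prefix probability. -/
noncomputable def Qpart (i : Fin n) (a : (Fin ((i:ℕ)+1) → 𝒳₁) × (Fin ((i:ℕ)+1) → 𝒳₂))
    (c : Fin (i:ℕ) → 𝒴) : ℝ :=
  ∏ j ∈ Finset.univ.filter (fun j : Fin n => (j:ℕ) < (i:ℕ)+1),
    q₁ j (extF ((i:ℕ)+1) a.1) (extF (i:ℕ) c) (extF ((i:ℕ)+1) a.1 j)
      * q₂ j (extF ((i:ℕ)+1) a.2) (extF (i:ℕ) c) (extF ((i:ℕ)+1) a.2 j)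

/-- The strictly-past channel part of the prefix probability. -/
noncomputable def Bpart (i : Fin n) (a : (Fin ((i:ℕ)+1) → 𝒳₁) × (Fin ((i:ℕ)+1) → 𝒳₂))
    (c : Fin (i:ℕ) → 𝒴) : ℝ :=
  ∏ j ∈ Finset.univ.filter (fun j : Fin n => (j:ℕ) < (i:ℕ)),
    p j (extF ((i:ℕ)+1) a.1) (extF ((i:ℕ)+1) a.2) (extF (i:ℕ) c) (extF (i:ℕ) c j)

/-- The current channel transition. -/
noncomputable def piP (i : Fin n) (a : (Fin ((i:ℕ)+1) → 𝒳₁) × (Fin ((i:ℕ)+1) → 𝒳₂))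
    (c : Fin (i:ℕ) → 𝒴) (b : 𝒴) : ℝ :=
  p i (extF ((i:ℕ)+1) a.1) (extF ((i:ℕ)+1) a.2) (extF (i:ℕ) c) b

variable (hq₁ : IsStrategy q₁) (hq₂ : IsStrategy q₂)
    (hp1 : ∀ i x₁ x₂ y, ∑ b, p i x₁ x₂ y b = 1)
    (hpCausal : ∀ i : Fin n, ∀ x₁ x₁' x₂ x₂' y y',
      (∀ j : Fin n, (j : ℕ) ≤ (i : ℕ) → x₁ j = x₁' j) →
      (∀ j : Fin n, (j : ℕ) ≤ (i : ℕ) → x₂ j = x₂' j) →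
      (∀ j : Fin n, (j : ℕ) < (i : ℕ) → y j = y' j) →
      p i x₁ x₂ y = p i x₁' x₂' y')
include hq₁ hq₂ hp1 hpCausal

lemma Pq_eq (i : Fin n) (a : (Fin ((i:ℕ)+1) → 𝒳₁) × (Fin ((i:ℕ)+1) → 𝒳₂)) (b : 𝒴)
    (c : Fin (i:ℕ) → 𝒴) :
    pmass (inducedLaw q₁ q₂ p)
      (fun t => ((((fun j : Fin ((i:ℕ)+1) => t.1 (Fin.castLE i.isLt j)),
        (fun j : Fin ((i:ℕ)+1) => t.2.1 (Fin.castLE i.isLt j))), t.2.2 i),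
        (fun j : Fin (i:ℕ) => t.2.2 (Fin.castLE i.isLt.le j)))) ((a, b), c)
      = Qpart q₁ q₂ i a c * Bpart p i a c * piP p i a c b := by
  set E1 := extF (n := n) ((i:ℕ)+1) a.1 with hE1
  set E2 := extF (n := n) ((i:ℕ)+1) a.2 with hE2
  set EY := extF (n := n) (i:ℕ) c with hEY
  set EB := extYb (n := n) (i:ℕ) b c with hEB
  have hEBY : ∀ k : Fin n, (k:ℕ) < (i:ℕ) → EB k = EY k := by
    intro k hk
    simp only [hEB, hEY, extYb, extF]
    rw [dif_pos hk, dif_pos hk]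
  have hEBi : EB i = b := by
    simp [hEB, extYb]
  -- step 1: pmass equals the prefix-marginal sum
  have h1 : pmass (inducedLaw q₁ q₂ p)
      (fun t => ((((fun j : Fin ((i:ℕ)+1) => t.1 (Fin.castLE i.isLt j)),
        (fun j : Fin ((i:ℕ)+1) => t.2.1 (Fin.castLE i.isLt j))), t.2.2 i),
        (fun j : Fin (i:ℕ) => t.2.2 (Fin.castLE i.isLt.le j)))) ((a, b), c)
      = ∑ t : (Fin n → 𝒳₁) × (Fin n → 𝒳₂) × (Fin n → 𝒴),
          if AgreeLt ((i:ℕ)+1) t (E1, E2, EB) then inducedLaw q₁ q₂ p t else 0 := by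
    unfold pmass
    exact Finset.sum_congr rfl fun t _ => if_congr (cond_iff i a b c t) rfl rfl
  rw [h1, marg q₁ q₂ p hq₁ hq₂ hp1 hpCausal (n - ((i:ℕ)+1)) ((i:ℕ)+1) (by omega) (E1, E2, EB)]
  -- step 2: rewrite each factor
  have hfac : ∀ j ∈ Finset.univ.filter (fun j : Fin n => (j:ℕ) < (i:ℕ)+1),
      Gfac q₁ q₂ p (E1, E2, EB) j
        = (q₁ j E1 EY (E1 j) * q₂ j E2 EY (E2 j)) * (p j E1 E2 EB (EB j)) := by
    intro j hj
    have hj' : (j:ℕ) < (i:ℕ)+1 := (Finset.mem_filter.mp hj).2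
    unfold Gfac
    have e1 : q₁ j E1 EB = q₁ j E1 EY :=
      hq₁.2.2 j E1 E1 EB EY (fun k _ => rfl) (fun k hk => hEBY k (by omega))
    have e2 : q₂ j E2 EB = q₂ j E2 EY :=
      hq₂.2.2 j E2 E2 EB EY (fun k _ => rfl) (fun k hk => hEBY k (by omega))
    rw [e1, e2]
  rw [Finset.prod_congr rfl hfac, Finset.prod_mul_distrib]
  -- step 3: split off the i-th factor of the channel part
  have him : ((i:ℕ) : ℕ) = (i:ℕ) := rfl
  have hfilter : Finset.univ.filter (fun j : Fin n => (j:ℕ) < (i:ℕ)+1)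
      = insert i (Finset.univ.filter (fun j : Fin n => (j:ℕ) < (i:ℕ))) := by
    ext j
    simp only [Finset.mem_filter, Finset.mem_insert, Finset.mem_univ, true_and, Fin.ext_iff]
    omega
  have hinotmem : i ∉ Finset.univ.filter (fun j : Fin n => (j:ℕ) < (i:ℕ)) := by simp
  have hchan : ∏ j ∈ Finset.univ.filter (fun j : Fin n => (j:ℕ) < (i:ℕ)+1),
      p j E1 E2 EB (EB j) = piP p i a c b * Bpart p i a c := by
    rw [hfilter, Finset.prod_insert hinotmem]
    congr 1
    · rw [hEBi]
      unfold piP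
      rw [hpCausal i E1 E1 E2 E2 EB EY (fun k _ => rfl) (fun k _ => rfl)
        (fun k hk => hEBY k hk)]
    · unfold Bpart
      refine Finset.prod_congr rfl fun j hj => ?_
      have hjlt : (j:ℕ) < (i:ℕ) := (Finset.mem_filter.mp hj).2
      rw [hEBY j hjlt,
        hpCausal j E1 E1 E2 E2 EB EY (fun k _ => rfl) (fun k _ => rfl)
          (fun k hk => hEBY k (by omega))]
  rw [hchan]
  unfold Qpart
  ring

end Products


section KeyAlg
variable {A Y : Type*} [Fintype A] [Fintype Y]

/-- The key algebraic lemma: if the current transition `π` is constant on the support of `B`,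
then the joint pmf `Q·B·π` satisfies the conditional-independence factorization. -/
lemma key_alg (Q B : A → ℝ) (pf : A → Y → ℝ)
    (hB : ∀ a, 0 ≤ B a) (hQ : ∀ a, 0 ≤ Q a) (hpf1 : ∀ a, ∑ b, pf a b = 1)
    (hE : ∀ a b, (B a * pf a b) * (∑ a', B a') = B a * (∑ a', B a' * pf a' b)) :
    ∀ a b, (Q a * B a * pf a b) * (∑ a', ∑ b', Q a' * B a' * pf a' b')
      = (∑ b', Q a * B a * pf a b') * (∑ a', Q a' * B a' * pf a' b) := by
  have hsum1 : ∀ a, ∑ b', Q a * B a * pf a b' = Q a * B a := by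
    intro a; rw [← Finset.mul_sum, hpf1 a, mul_one]
  have hsum2 : ∑ a', ∑ b', Q a' * B a' * pf a' b' = ∑ a', Q a' * B a' :=
    Finset.sum_congr rfl fun a' _ => hsum1 a'
  intro a b
  rw [hsum1 a, hsum2, Finset.mul_sum, Finset.mul_sum]
  refine Finset.sum_congr rfl fun a' _ => ?_
  rcases eq_or_lt_of_le (hB a) with h | hBa
  · rw [← h]; ring
  rcases eq_or_lt_of_le (hB a') with h | hBa'
  · rw [← h]; ring
  have hS : 0 < ∑ a'', B a'' :=
    lt_of_lt_of_le hBa (Finset.single_le_sum (fun x _ => hB x) (Finset.mem_univ a))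
  have hv : ∀ x : A, 0 < B x → pf x b * (∑ a'', B a'') = ∑ a'', B a'' * pf a'' b := by
    intro x hx
    have h1 := hE x b
    have h2 : B x * (pf x b * (∑ a'', B a'')) = B x * (∑ a'', B a'' * pf a'' b) := by
      rw [← h1]; ring
    exact mul_left_cancel₀ hx.ne' h2
  have hpfpf : pf a b = pf a' b := by
    have := (hv a hBa).trans (hv a' hBa').symm
    exact mul_right_cancel₀ hS.ne' this
  rw [hpfpf]; ring

end KeyAlg

/-- If the directed information `I(X₁^n, X₂^n → Y^n)` of a causal channel `p` vanishes under
every pair of non-feedback input strategies (product input distributions `Q(x₁^n)Q(x₂^n)`),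
then it also vanishes under every pair of causal, feedback-dependent input strategies
`Q(x₁^n ‖ y^{n-1}) Q(x₂^n ‖ y^{n-1})`. -/
theorem directedInfo_zero_of_zero_without_feedback
    {𝒳₁ 𝒳₂ 𝒴 : Type*}
    [Fintype 𝒳₁] [DecidableEq 𝒳₁] [Nonempty 𝒳₁]
    [Fintype 𝒳₂] [DecidableEq 𝒳₂] [Nonempty 𝒳₂]
    [Fintype 𝒴] [DecidableEq 𝒴] [Nonempty 𝒴]
    {n : ℕ} (hn : 1 ≤ n)
    (p : Fin n → (Fin n → 𝒳₁) → (Fin n → 𝒳₂) → (Fin n → 𝒴) → 𝒴 → ℝ)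
    (hp0 : ∀ i x₁ x₂ y b, 0 ≤ p i x₁ x₂ y b)
    (hp1 : ∀ i x₁ x₂ y, ∑ b, p i x₁ x₂ y b = 1)
    (hpCausal : ∀ i : Fin n, ∀ x₁ x₁' x₂ x₂' y y',
      (∀ j : Fin n, (j : ℕ) ≤ (i : ℕ) → x₁ j = x₁' j) →
      (∀ j : Fin n, (j : ℕ) ≤ (i : ℕ) → x₂ j = x₂' j) →
      (∀ j : Fin n, (j : ℕ) < (i : ℕ) → y j = y' j) →
      p i x₁ x₂ y = p i x₁' x₂' y')
    (hzero : ∀ (q₁ : Fin n → (Fin n → 𝒳₁) → (Fin n → 𝒴) → 𝒳₁ → ℝ)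
      (q₂ : Fin n → (Fin n → 𝒳₂) → (Fin n → 𝒴) → 𝒳₂ → ℝ),
      IsStrategy q₁ → IsStrategy q₂ → NoFeedback q₁ → NoFeedback q₂ →
      directedInfo (inducedLaw q₁ q₂ p) = 0) :
    ∀ (q₁ : Fin n → (Fin n → 𝒳₁) → (Fin n → 𝒴) → 𝒳₁ → ℝ)
      (q₂ : Fin n → (Fin n → 𝒳₂) → (Fin n → 𝒴) → 𝒳₂ → ℝ),
      IsStrategy q₁ → IsStrategy q₂ →
      directedInfo (inducedLaw q₁ q₂ p) = 0 := by
  intro q₁ q₂ hq₁ hq₂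
  -- the uniform (non-feedback) strategies
  set u₁ : Fin n → (Fin n → 𝒳₁) → (Fin n → 𝒴) → 𝒳₁ → ℝ :=
    fun _ _ _ _ => (Fintype.card 𝒳₁ : ℝ)⁻¹ with hu₁def
  set u₂ : Fin n → (Fin n → 𝒳₂) → (Fin n → 𝒴) → 𝒳₂ → ℝ :=
    fun _ _ _ _ => (Fintype.card 𝒳₂ : ℝ)⁻¹ with hu₂def
  have hc₁ : (0:ℝ) < Fintype.card 𝒳₁ := by exact_mod_cast Fintype.card_pos
  have hc₂ : (0:ℝ) < Fintype.card 𝒳₂ := by exact_mod_cast Fintype.card_pos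
  have hu₁ : IsStrategy u₁ :=
    ⟨fun _ _ _ _ => by positivity,
     fun i x y => by
      simp only [hu₁def, Finset.sum_const, Finset.card_univ, nsmul_eq_mul]
      field_simp,
     fun _ _ _ _ _ _ _ => rfl⟩
  have hu₂ : IsStrategy u₂ :=
    ⟨fun _ _ _ _ => by positivity,
     fun i x y => by
      simp only [hu₂def, Finset.sum_const, Finset.card_univ, nsmul_eq_mul]
      field_simp,
     fun _ _ _ _ _ _ _ => rfl⟩
  have hz := hzero u₁ u₂ hu₁ hu₂ (fun _ _ _ _ => rfl) (fun _ _ _ _ => rfl)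
  -- directed information as a sum of `Fcmi`'s of the factorized prefix pmf
  have key : ∀ (r₁ : Fin n → (Fin n → 𝒳₁) → (Fin n → 𝒴) → 𝒳₁ → ℝ)
      (r₂ : Fin n → (Fin n → 𝒳₂) → (Fin n → 𝒴) → 𝒳₂ → ℝ),
      IsStrategy r₁ → IsStrategy r₂ →
      directedInfo (inducedLaw r₁ r₂ p) = ∑ i : Fin n,
        Fcmi (fun (a : (Fin ((i:ℕ)+1) → 𝒳₁) × (Fin ((i:ℕ)+1) → 𝒳₂)) (b : 𝒴)
          (c : Fin (i:ℕ) → 𝒴) => Qpart r₁ r₂ i a c * Bpart p i a c * piP p i a c b) := by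
    intro r₁ r₂ hr₁ hr₂
    unfold directedInfo
    refine Finset.sum_congr rfl fun i _ => ?_
    rw [condMutualInfo_eq_Fcmi]
    exact congrArg Fcmi (funext fun a => funext fun b => funext fun c =>
      Pq_eq r₁ r₂ p hr₁ hr₂ hp1 hpCausal i a b c)
  -- nonnegativity of the factorized pmf's
  have hPnonneg : ∀ (r₁ : Fin n → (Fin n → 𝒳₁) → (Fin n → 𝒴) → 𝒳₁ → ℝ)
      (r₂ : Fin n → (Fin n → 𝒳₂) → (Fin n → 𝒴) → 𝒳₂ → ℝ),
      IsStrategy r₁ → IsStrategy r₂ → ∀ (i : Fin n) a b c,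
      0 ≤ Qpart r₁ r₂ i a c * Bpart p i a c * piP p i a c b := by
    intro r₁ r₂ hr₁ hr₂ i a b c
    refine mul_nonneg (mul_nonneg ?_ ?_) ?_
    · exact Finset.prod_nonneg fun j _ => mul_nonneg (hr₁.1 _ _ _ _) (hr₂.1 _ _ _ _)
    · exact Finset.prod_nonneg fun j _ => hp0 _ _ _ _ _
    · exact hp0 _ _ _ _ _
  -- each uniform `Fcmi` vanishes
  have hzsum : ∑ i : Fin n,
      Fcmi (fun (a : (Fin ((i:ℕ)+1) → 𝒳₁) × (Fin ((i:ℕ)+1) → 𝒳₂)) (b : 𝒴)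
        (c : Fin (i:ℕ) → 𝒴) => Qpart u₁ u₂ i a c * Bpart p i a c * piP p i a c b) = 0 := by
    rw [← key u₁ u₂ hu₁ hu₂]; exact hz
  have hu_zero : ∀ i : Fin n,
      Fcmi (fun (a : (Fin ((i:ℕ)+1) → 𝒳₁) × (Fin ((i:ℕ)+1) → 𝒳₂)) (b : 𝒴)
        (c : Fin (i:ℕ) → 𝒴) => Qpart u₁ u₂ i a c * Bpart p i a c * piP p i a c b) = 0 :=
    fun i => (Finset.sum_eq_zero_iff_of_nonneg
      (fun i _ => Fcmi_nonneg _ (hPnonneg u₁ u₂ hu₁ hu₂ i))).mp hzsum i (Finset.mem_univ i)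
  -- the uniform `Qpart` is a positive constant
  have hQu : ∀ (i : Fin n) a c, Qpart u₁ u₂ i a c
      = ((Fintype.card 𝒳₁ : ℝ)⁻¹ * (Fintype.card 𝒳₂ : ℝ)⁻¹)
          ^ (Finset.univ.filter (fun j : Fin n => (j:ℕ) < (i:ℕ)+1)).card := by
    intro i a c
    unfold Qpart
    rw [← Finset.prod_const ((Fintype.card 𝒳₁ : ℝ)⁻¹ * (Fintype.card 𝒳₂ : ℝ)⁻¹)]
  have hκpos : ∀ i : Fin n, (0:ℝ) <
      ((Fintype.card 𝒳₁ : ℝ)⁻¹ * (Fintype.card 𝒳₂ : ℝ)⁻¹)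
        ^ (Finset.univ.filter (fun j : Fin n => (j:ℕ) < (i:ℕ)+1)).card :=
    fun i => pow_pos (by positivity) _
  -- extract conditional independence of the channel from the uniform case
  have hE : ∀ (i : Fin n) (c : Fin (i:ℕ) → 𝒴)
      (a : (Fin ((i:ℕ)+1) → 𝒳₁) × (Fin ((i:ℕ)+1) → 𝒳₂)) (b : 𝒴),
      (Bpart p i a c * piP p i a c b) * (∑ a', Bpart p i a' c)
        = Bpart p i a c * (∑ a', Bpart p i a' c * piP p i a' c b) := by
    intro i c a b
    have hfac := Fcmi_eq_zero_imp _ (hPnonneg u₁ u₂ hu₁ hu₂ i) (hu_zero i) a b c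
    set κ := ((Fintype.card 𝒳₁ : ℝ)⁻¹ * (Fintype.card 𝒳₂ : ℝ)⁻¹)
        ^ (Finset.univ.filter (fun j : Fin n => (j:ℕ) < (i:ℕ)+1)).card with hκ
    simp only [hQu] at hfac
    have hπs : ∀ a', ∑ b', piP p i a' c b' = 1 := fun a' => hp1 i _ _ _
    have m1 : ∀ a', ∑ b', κ * Bpart p i a' c * piP p i a' c b' = κ * Bpart p i a' c := by
      intro a'; rw [← Finset.mul_sum, hπs, mul_one]
    have m2 : ∑ a', ∑ b', κ * Bpart p i a' c * piP p i a' c b' = κ * ∑ a', Bpart p i a' c := by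
      rw [Finset.sum_congr rfl (fun a' _ => m1 a'), ← Finset.mul_sum]
    have m3 : ∑ a', κ * Bpart p i a' c * piP p i a' c b
        = κ * ∑ a', Bpart p i a' c * piP p i a' c b := by
      rw [Finset.mul_sum]
      exact Finset.sum_congr rfl fun a' _ => by ring
    rw [m2, m1, m3] at hfac
    have hκ0 : κ ≠ 0 := (hκpos i).ne'
    have h2 : (κ * κ) * ((Bpart p i a c * piP p i a c b) * (∑ a', Bpart p i a' c))
        = (κ * κ) * (Bpart p i a c * (∑ a', Bpart p i a' c * piP p i a' c b)) := by
      calc (κ * κ) * ((Bpart p i a c * piP p i a c b) * (∑ a', Bpart p i a' c))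
          = (κ * Bpart p i a c * piP p i a c b) * (κ * ∑ a', Bpart p i a' c) := by ring
        _ = (κ * Bpart p i a c) * (κ * ∑ a', Bpart p i a' c * piP p i a' c b) := hfac
        _ = (κ * κ) * (Bpart p i a c * (∑ a', Bpart p i a' c * piP p i a' c b)) := by ring
    exact mul_left_cancel₀ (mul_ne_zero hκ0 hκ0) h2
  -- conclude for the causal strategies
  rw [key q₁ q₂ hq₁ hq₂]
  refine Finset.sum_eq_zero fun i _ => ?_
  refine Fcmi_eq_zero_of_factor _ (hPnonneg q₁ q₂ hq₁ hq₂ i) ?_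
  intro a b c
  exact key_alg (fun a => Qpart q₁ q₂ i a c) (fun a => Bpart p i a c)
    (fun a b => piP p i a c b)
    (fun a => Finset.prod_nonneg fun j _ => hp0 _ _ _ _ _)
    (fun a => Finset.prod_nonneg fun j _ => mul_nonneg (hq₁.1 _ _ _ _) (hq₂.1 _ _ _ _))
    (fun a => hp1 i _ _ _)
    (fun a b => hE i c a b) a b
end
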